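/- arXiv:2403.04347 — 3 statements merged into one kernel-verified Lean document; each statement's English description precedes it below -/
import Mathlib

section
/- Let γ > 2 and define F_γ : L¹(ℝ) → ℝ ∪ {+∞} by F_γ(m) = ‖m̂ − exp‖²_{L²_γ} if m̂ − exp ∈ L²_γ(ℝ), and +∞ otherwise (where exp(k) = e^k). Then F_γ is strictly convex and lower semicontinuous on L¹(ℝ). -/
open MeasureTheory Complex
open scoped ENNReal

section Aux

open Filter SchwartzMap
open scoped FourierTransform Real

noncomputable def FT' (f : ℝ → ℂ) : ℝ → ℂ :=
  fun k => ∫ x : ℝ, f x * Complex.exp (-Complex.I * k * x)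

lemma FT'_eq_fourierIntegral (f : ℝ → ℂ) (k : ℝ) : FT' f k = 𝓕 f (k / (2 * π)) := by
  rw [Real.fourier_real_eq_integral_exp_smul, FT']
  congr 1
  ext x
  rw [smul_eq_mul, mul_comm]
  congr 2
  have : (-2) * π * x * (k / (2 * π)) = -(k * x) := by
    field_simp
  rw [this]
  push_cast
  ring

lemma fourierIntegral_eq_FT' (f : ℝ → ℂ) (ξ : ℝ) : 𝓕 f ξ = FT' f (2 * π * ξ) := by
  rw [FT'_eq_fourierIntegral]
  congr 1
  field_simp

lemma FT'_continuous {f : ℝ → ℂ} (hf : Integrable f) : Continuous (FT' f) := by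
  have : FT' f = fun k => 𝓕 f (k / (2 * π)) := funext (FT'_eq_fourierIntegral f)
  rw [this]
  exact (VectorFourier.fourierIntegral_continuous Real.continuous_fourierChar
    continuous_inner hf).comp (continuous_id.div_const _)

lemma integrable_mul_exp {f : ℝ → ℂ} (hf : Integrable f) (k : ℝ) :
    Integrable (fun x => f x * Complex.exp (-Complex.I * k * x)) := by
  apply (hf.bdd_mul (c := 1) ?_ ?_).congr (Eventually.of_forall fun x => mul_comm _ _)
  · exact (Continuous.aestronglyMeasurable (by fun_prop))
  · filter_upwards with x
    rw [Complex.norm_exp]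
    simp

lemma FT'_congr {f g : ℝ → ℂ} (h : f =ᵐ[volume] g) (k : ℝ) : FT' f k = FT' g k := by
  refine integral_congr_ae ?_
  filter_upwards [h] with x hx
  rw [hx]

lemma FT'_sub {f g : ℝ → ℂ} (hf : Integrable f) (hg : Integrable g) (k : ℝ) :
    FT' (f - g) k = FT' f k - FT' g k := by
  unfold FT'
  rw [← integral_sub (integrable_mul_exp hf k) (integrable_mul_exp hg k)]
  congr 1; ext x; simp [sub_mul]

lemma FT'_norm_le {f : ℝ → ℂ} (k : ℝ) : ‖FT' f k‖ ≤ ∫ x, ‖f x‖ := by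
  refine (norm_integral_le_integral_norm _).trans_eq ?_
  congr 1; ext x
  rw [norm_mul, Complex.norm_exp]
  simp

lemma FT'_combo {f g : ℝ → ℂ} (hf : Integrable f) (hg : Integrable g) (t : ℝ) (k : ℝ) :
    FT' (fun x => (t : ℂ) • f x + ((1 - t : ℝ) : ℂ) • g x) k
      = (t : ℂ) * FT' f k + ((1 - t : ℝ) : ℂ) * FT' g k := by
  unfold FT'
  have h1 : (∀ x : ℝ, ((t : ℂ) • f x + ((1 - t : ℝ) : ℂ) • g x) * Complex.exp (-Complex.I * k * x)
      = (t : ℂ) * (f x * Complex.exp (-Complex.I * k * x))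
        + ((1 - t : ℝ) : ℂ) * (g x * Complex.exp (-Complex.I * k * x))) := by
    intro x; simp only [smul_eq_mul]; ring
  simp only [h1]
  rw [integral_add ((integrable_mul_exp hf k).const_mul ((t:ℂ)))
    ((integrable_mul_exp hg k).const_mul _), integral_const_mul, integral_const_mul]

lemma norm_sq_complex (z : ℂ) : ‖z‖ ^ 2 = z.re ^ 2 + z.im ^ 2 := by
  rw [Complex.sq_norm, Complex.normSq_apply]
  ring

lemma combo_norm_id (a b : ℂ) (t : ℝ) :
    ‖(t : ℂ) * a + ((1 - t : ℝ) : ℂ) * b‖ ^ 2 + t * (1 - t) * ‖a - b‖ ^ 2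
      = t * ‖a‖ ^ 2 + (1 - t) * ‖b‖ ^ 2 := by
  simp only [norm_sq_complex, Complex.add_re, Complex.add_im, Complex.mul_re, Complex.mul_im,
    Complex.sub_re, Complex.sub_im, Complex.ofReal_re, Complex.ofReal_im]
  ring

lemma nnnorm_sq_ennreal (z : ℂ) : (‖z‖₊ : ℝ≥0∞) ^ 2 = ENNReal.ofReal (‖z‖ ^ 2) := by
  rw [ENNReal.ofReal_pow (norm_nonneg z), ← enorm_eq_nnnorm, ofReal_norm]

lemma combo_norm_id_ennreal (a b : ℂ) {t : ℝ} (ht0 : 0 ≤ t) (ht1 : t ≤ 1) :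
    (‖(t : ℂ) * a + ((1 - t : ℝ) : ℂ) * b‖₊ : ℝ≥0∞) ^ 2
        + ENNReal.ofReal (t * (1 - t)) * (‖a - b‖₊ : ℝ≥0∞) ^ 2
      = ENNReal.ofReal t * (‖a‖₊ : ℝ≥0∞) ^ 2 + ENNReal.ofReal (1 - t) * (‖b‖₊ : ℝ≥0∞) ^ 2 := by
  have h1t : 0 ≤ 1 - t := by linarith
  simp only [nnnorm_sq_ennreal]
  rw [← ENNReal.ofReal_mul (by positivity), ← ENNReal.ofReal_mul ht0,
    ← ENNReal.ofReal_mul h1t, ← ENNReal.ofReal_add (by positivity) (by positivity),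
    ← ENNReal.ofReal_add (by positivity) (by positivity), combo_norm_id]

noncomputable def schwartzOfCompactSupport (g : ℝ → ℂ) (h1 : ContDiff ℝ ((⊤ : ℕ∞) : WithTop ℕ∞) g)
    (h2 : HasCompactSupport g) : 𝓢(ℝ, ℂ) where
  toFun := g
  smooth' := h1
  decay' := by
    intro k n
    set φ : ℝ → ℝ := fun x => ‖x‖ ^ k * ‖iteratedFDeriv ℝ n g x‖ with hφ
    have hc : Continuous φ := by
      apply Continuous.mul (by fun_prop)
      exact (h1.continuous_iteratedFDeriv (by exact_mod_cast le_top)).norm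
    have hs : HasCompactSupport φ := by
      apply HasCompactSupport.mul_left
      exact (h2.iteratedFDeriv n).norm
    obtain ⟨C, hC⟩ := (hc.bddAbove_range_of_hasCompactSupport hs)
    exact ⟨C, fun x => hC ⟨x, rfl⟩⟩

/-- multiplication formula, real version. -/
lemma mult_formula (f g : ℝ → ℂ) (hf : Integrable f) (hg : Integrable g) :
    ∫ ξ, (𝓕 f ξ) • g ξ = ∫ x, f x • 𝓕 g x := by
  have hflip : (innerₗ ℝ).flip = innerₗ ℝ := by
    apply LinearMap.ext; intro x; apply LinearMap.ext; intro y
    exact real_inner_comm x y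
  have := VectorFourier.integral_fourierIntegral_smul_eq_flip (μ := (volume : Measure ℝ))
    (ν := (volume : Measure ℝ)) (L := innerₗ ℝ) Real.continuous_fourierChar
    continuous_inner hf hg
  rw [hflip] at this
  exact this

set_option maxHeartbeats 2000000 in
lemma fourier_injective {d : ℝ → ℂ} (hd : Integrable d) (h : ∀ ξ, 𝓕 d ξ = 0) :
    d =ᵐ[volume] 0 := by
  apply ae_eq_zero_of_integral_contDiff_smul_eq_zero hd.locallyIntegrable
  intro g hg hgsupp
  have hgC : ContDiff ℝ ((⊤ : ℕ∞) : WithTop ℕ∞) (fun x => (g x : ℂ)) :=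
    Complex.ofRealCLM.contDiff.comp (by exact hg)
  set G : 𝓢(ℝ, ℂ) := schwartzOfCompactSupport (fun x => (g x : ℂ))
    hgC (hgsupp.comp_left (g := Complex.ofReal) (by simp)) with hG
  set h₀ : 𝓢(ℝ, ℂ) := (fourierTransformCLE ℂ 𝓢(ℝ, ℂ)).symm G with hh
  have hFh : 𝓕 (⇑h₀) = ⇑G := by
    have h2 := (fourierTransformCLE ℂ 𝓢(ℝ, ℂ)).apply_symm_apply G
    calc 𝓕 ⇑h₀ = ⇑(fourierTransformCLE ℂ 𝓢(ℝ, ℂ) h₀) := rfl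
    _ = ⇑G := by rw [h2]
  have key := mult_formula (⇑h₀) d h₀.integrable hd
  rw [hFh] at key
  have hz : ∫ x, (g x : ℂ) • d x = 0 := by
    rw [show (fun x => (g x:ℂ) • d x) = fun x => ⇑G x • d x from rfl, key]
    simp only [h]
    simp
  simpa [Complex.real_smul] using hz

end Aux

noncomputable def FT (f : ℝ → ℂ) : ℝ → ℂ :=
  fun k => ∫ x : ℝ, f x * Complex.exp (-Complex.I * k * x)

lemma FT_eq_FT' : FT = FT' := rfl

/-- `F_γ(m) = ‖m̂ − exp‖²_{L²_γ}`, with value `+∞` encoded via the lower integral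
(the value is finite exactly when `m̂ − exp ∈ L²_γ`). -/
noncomputable def Fgamma (γ : ℝ) (m : Lp ℂ 1 (volume : Measure ℝ)) : ℝ≥0∞ :=
  ∫⁻ k : ℝ, (‖FT (⇑m) k - Real.exp k‖₊ : ℝ≥0∞) ^ 2 * ENNReal.ofReal (Real.exp (-γ * k))

section Main

open Filter
open scoped FourierTransform Real

lemma meas_aux (γ : ℝ) {v : ℝ → ℂ} (hv : Continuous v) :
    Measurable fun k => (‖v k‖₊ : ℝ≥0∞) ^ 2 * ENNReal.ofReal (Real.exp (-γ * k)) := by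
  apply Measurable.mul (f := fun k => (‖v k‖₊ : ℝ≥0∞) ^ 2) (g := fun k => ENNReal.ofReal (Real.exp (-γ * k)))
  · exact ((ENNReal.continuous_coe.comp hv.nnnorm).measurable).pow_const 2
  · exact ENNReal.measurable_ofReal.comp (by fun_prop)

lemma FT_coe_combo (m₁ m₂ : Lp ℂ 1 (volume : Measure ℝ)) (t : ℝ) (k : ℝ) :
    FT (⇑((t : ℂ) • m₁ + ((1 - t : ℝ) : ℂ) • m₂)) k
      = (t : ℂ) * FT (⇑m₁) k + ((1 - t : ℝ) : ℂ) * FT (⇑m₂) k := by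
  rw [FT_eq_FT']
  rw [FT'_congr (f := ⇑((t : ℂ) • m₁ + ((1 - t : ℝ) : ℂ) • m₂))
      (g := fun x => (t : ℂ) • (⇑m₁) x + ((1 - t : ℝ) : ℂ) • (⇑m₂) x) ?_ k]
  · exact FT'_combo (L1.integrable_coeFn m₁) (L1.integrable_coeFn m₂) t k
  · filter_upwards [Lp.coeFn_add ((t : ℂ) • m₁) (((1 - t : ℝ) : ℂ) • m₂),
      Lp.coeFn_smul ((t : ℂ)) m₁, Lp.coeFn_smul (((1 - t : ℝ) : ℂ)) m₂] with x h1 h2 h3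
    rw [h1, Pi.add_apply, h2, h3, Pi.smul_apply, Pi.smul_apply]

lemma Fgamma_identity (γ : ℝ) {t : ℝ} (ht0 : 0 ≤ t) (ht1 : t ≤ 1)
    (m₁ m₂ : Lp ℂ 1 (volume : Measure ℝ)) :
    Fgamma γ ((t : ℂ) • m₁ + ((1 - t : ℝ) : ℂ) • m₂) + ENNReal.ofReal (t * (1 - t)) *
        ∫⁻ k, (‖FT (⇑m₁) k - FT (⇑m₂) k‖₊ : ℝ≥0∞) ^ 2 * ENNReal.ofReal (Real.exp (-γ * k))
      = ENNReal.ofReal t * Fgamma γ m₁ + ENNReal.ofReal (1 - t) * Fgamma γ m₂ := by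
  set w : ℝ → ℝ≥0∞ := fun k => ENNReal.ofReal (Real.exp (-γ * k)) with hw
  set a : ℝ → ℂ := fun k => FT (⇑m₁) k - Real.exp k with haa
  set b : ℝ → ℂ := fun k => FT (⇑m₂) k - Real.exp k with hbb
  have ha : Continuous a := (FT'_continuous (L1.integrable_coeFn m₁)).sub (by fun_prop)
  have hb : Continuous b := (FT'_continuous (L1.integrable_coeFn m₂)).sub (by fun_prop)
  have hab : ∀ k, FT (⇑m₁) k - FT (⇑m₂) k = a k - b k := by
    intro k; simp only [haa, hbb]; ring
  have hM : ∀ k, FT (⇑((t : ℂ) • m₁ + ((1 - t : ℝ) : ℂ) • m₂)) k - Real.exp k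
      = (t : ℂ) * a k + ((1 - t : ℝ) : ℂ) * b k := by
    intro k
    rw [FT_coe_combo]
    simp only [haa, hbb]
    push_cast
    ring
  have hcont : Continuous fun k => (t : ℂ) * a k + ((1 - t : ℝ) : ℂ) * b k := by fun_prop
  calc Fgamma γ ((t : ℂ) • m₁ + ((1 - t : ℝ) : ℂ) • m₂) + ENNReal.ofReal (t * (1 - t)) *
        ∫⁻ k, (‖FT (⇑m₁) k - FT (⇑m₂) k‖₊ : ℝ≥0∞) ^ 2 * w k
      = (∫⁻ k, (‖(t : ℂ) * a k + ((1 - t : ℝ) : ℂ) * b k‖₊ : ℝ≥0∞) ^ 2 * w k)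
        + ∫⁻ k, ENNReal.ofReal (t * (1 - t)) * ((‖a k - b k‖₊ : ℝ≥0∞) ^ 2 * w k) := by
        rw [Fgamma, lintegral_const_mul' _ _ ENNReal.ofReal_ne_top]
        congr 1
        · exact lintegral_congr fun k => by rw [hM]
        · congr 1; exact lintegral_congr fun k => by rw [hab]
    _ = ∫⁻ k, ((‖(t : ℂ) * a k + ((1 - t : ℝ) : ℂ) * b k‖₊ : ℝ≥0∞) ^ 2
          + ENNReal.ofReal (t * (1 - t)) * (‖a k - b k‖₊ : ℝ≥0∞) ^ 2) * w k := by
        rw [← lintegral_add_left (meas_aux γ hcont)]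
        exact lintegral_congr fun k => by ring
    _ = ∫⁻ k, (ENNReal.ofReal t * (‖a k‖₊ : ℝ≥0∞) ^ 2
          + ENNReal.ofReal (1 - t) * (‖b k‖₊ : ℝ≥0∞) ^ 2) * w k := by
        exact lintegral_congr fun k => by rw [combo_norm_id_ennreal _ _ ht0 ht1]
    _ = (∫⁻ k, ENNReal.ofReal t * ((‖a k‖₊ : ℝ≥0∞) ^ 2 * w k))
        + ∫⁻ k, ENNReal.ofReal (1 - t) * ((‖b k‖₊ : ℝ≥0∞) ^ 2 * w k) := by
        rw [← lintegral_add_left ((meas_aux γ ha).const_mul _)]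
        exact lintegral_congr fun k => by ring
    _ = ENNReal.ofReal t * Fgamma γ m₁ + ENNReal.ofReal (1 - t) * Fgamma γ m₂ := by
        rw [Fgamma, Fgamma, lintegral_const_mul' _ _ ENNReal.ofReal_ne_top,
          lintegral_const_mul' _ _ ENNReal.ofReal_ne_top]

lemma FT_dist_le (m m' : Lp ℂ 1 (volume : Measure ℝ)) (k : ℝ) :
    ‖FT (⇑m) k - FT (⇑m') k‖ ≤ dist m m' := by
  have h1 : FT (⇑m) k - FT (⇑m') k = FT' (⇑(m - m')) k := by
    rw [FT'_congr (Lp.coeFn_sub m m') k, FT'_sub (L1.integrable_coeFn m) (L1.integrable_coeFn m'),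
      FT_eq_FT']
  rw [h1, dist_eq_norm, L1.norm_eq_integral_norm]
  exact FT'_norm_le k

lemma FT_norm_le_norm (m : Lp ℂ 1 (volume : Measure ℝ)) (k : ℝ) :
    ‖FT (⇑m) k‖ ≤ ‖m‖ := by
  rw [L1.norm_eq_integral_norm, FT_eq_FT']
  exact FT'_norm_le k

end Main

open Filter
open scoped FourierTransform Real

theorem Fgamma_strictConvex_lsc (γ : ℝ) (hγ : 2 < γ) :
    (∀ m₁ m₂ : Lp ℂ 1 (volume : Measure ℝ), ∀ t : ℝ, 0 ≤ t → t ≤ 1 →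
      Fgamma γ ((t : ℂ) • m₁ + ((1 - t : ℝ) : ℂ) • m₂) ≤
        ENNReal.ofReal t * Fgamma γ m₁ + ENNReal.ofReal (1 - t) * Fgamma γ m₂) ∧
    (∀ m₁ m₂ : Lp ℂ 1 (volume : Measure ℝ), m₁ ≠ m₂ →
      Fgamma γ m₁ < ⊤ → Fgamma γ m₂ < ⊤ → ∀ t : ℝ, 0 < t → t < 1 →
      Fgamma γ ((t : ℂ) • m₁ + ((1 - t : ℝ) : ℂ) • m₂) <
        ENNReal.ofReal t * Fgamma γ m₁ + ENNReal.ofReal (1 - t) * Fgamma γ m₂) ∧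
    LowerSemicontinuous (Fgamma γ) := by
  refine ⟨?_, ?_, ?_⟩
  · -- convexity
    intro m₁ m₂ t ht0 ht1
    calc Fgamma γ ((t : ℂ) • m₁ + ((1 - t : ℝ) : ℂ) • m₂)
        ≤ Fgamma γ ((t : ℂ) • m₁ + ((1 - t : ℝ) : ℂ) • m₂) + ENNReal.ofReal (t * (1 - t)) *
          ∫⁻ k, (‖FT (⇑m₁) k - FT (⇑m₂) k‖₊ : ℝ≥0∞) ^ 2 * ENNReal.ofReal (Real.exp (-γ * k)) :=
        le_self_add
      _ = _ := Fgamma_identity γ ht0 ht1 m₁ m₂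
  · -- strict convexity
    intro m₁ m₂ hne h₁ h₂ t ht0 ht1
    have hid := Fgamma_identity γ ht0.le ht1.le m₁ m₂
    set D : ℝ≥0∞ :=
      ∫⁻ k, (‖FT (⇑m₁) k - FT (⇑m₂) k‖₊ : ℝ≥0∞) ^ 2 * ENNReal.ofReal (Real.exp (-γ * k)) with hD
    have hdiffc : Continuous fun k => FT (⇑m₁) k - FT (⇑m₂) k := by
      rw [FT_eq_FT']
      exact (FT'_continuous (L1.integrable_coeFn m₁)).sub (FT'_continuous (L1.integrable_coeFn m₂))
    have hDne : D ≠ 0 := by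
      intro hD0
      have hae := (lintegral_eq_zero_iff (meas_aux γ hdiffc)).mp hD0
      have hae2 : (fun k => FT (⇑m₁) k - FT (⇑m₂) k) =ᵐ[volume] (fun _ => 0) := by
        filter_upwards [hae] with k hk
        simp only [Pi.zero_apply] at hk
        rcases mul_eq_zero.mp hk with h | h
        · have h2 : (‖FT (⇑m₁) k - FT (⇑m₂) k‖₊ : ℝ≥0∞) = 0 :=
            pow_eq_zero_iff two_ne_zero |>.mp h
          simpa using h2
        · exact absurd h (by simp [ENNReal.ofReal_eq_zero, (Real.exp_pos _).not_ge, not_le.mpr])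
      have hzero : (fun k => FT (⇑m₁) k - FT (⇑m₂) k) = (fun _ => 0) :=
        (hdiffc.ae_eq_iff_eq volume continuous_const).mp hae2
      have h𝓕 : ∀ ξ, 𝓕 (⇑(m₁ - m₂)) ξ = 0 := by
        intro ξ
        rw [fourierIntegral_eq_FT', FT'_congr (Lp.coeFn_sub m₁ m₂),
          FT'_sub (L1.integrable_coeFn m₁) (L1.integrable_coeFn m₂)]
        have := congrFun hzero (2 * π * ξ)
        rw [FT_eq_FT'] at this
        exact this
      have hd0 := fourier_injective (L1.integrable_coeFn (m₁ - m₂)) h𝓕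
      have : m₁ - m₂ = 0 := (Lp.eq_zero_iff_ae_eq_zero).mpr hd0
      exact hne (sub_eq_zero.mp this)
    have hcorr_ne : ENNReal.ofReal (t * (1 - t)) * D ≠ 0 := by
      apply mul_ne_zero _ hDne
      simp only [ne_eq, ENNReal.ofReal_eq_zero, not_le]
      nlinarith
    have hRHS_lt : ENNReal.ofReal t * Fgamma γ m₁ + ENNReal.ofReal (1 - t) * Fgamma γ m₂ < ⊤ :=
      ENNReal.add_lt_top.2 ⟨ENNReal.mul_lt_top ENNReal.ofReal_lt_top h₁,
        ENNReal.mul_lt_top ENNReal.ofReal_lt_top h₂⟩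
    have hfin : Fgamma γ ((t : ℂ) • m₁ + ((1 - t : ℝ) : ℂ) • m₂) ≠ ⊤ := by
      intro htop
      rw [htop, top_add] at hid
      exact (hid ▸ hRHS_lt).ne rfl
    calc Fgamma γ ((t : ℂ) • m₁ + ((1 - t : ℝ) : ℂ) • m₂)
        < Fgamma γ ((t : ℂ) • m₁ + ((1 - t : ℝ) : ℂ) • m₂) + ENNReal.ofReal (t * (1 - t)) * D :=
        ENNReal.lt_add_right hfin hcorr_ne
      _ = _ := hid
  · -- lower semicontinuity
    intro m c hc
    set g : Lp ℂ 1 (volume : Measure ℝ) → ℝ → ℝ≥0∞ :=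
      fun m' k => (‖FT (⇑m') k - Real.exp k‖₊ : ℝ≥0∞) ^ 2 * ENNReal.ofReal (Real.exp (-γ * k))
      with hg
    have hγ0 : (0:ℝ) < γ := by linarith
    have hgmeas : ∀ m' : Lp ℂ 1 (volume : Measure ℝ), Measurable (g m') := by
      intro m'
      apply meas_aux γ
      rw [FT_eq_FT']
      exact (FT'_continuous (L1.integrable_coeFn m')).sub (by fun_prop)
    have hFg : ∀ m' : Lp ℂ 1 (volume : Measure ℝ), Fgamma γ m' = ∫⁻ k, g m' k := fun m' => rfl
    have hsup : ∀ m' : Lp ℂ 1 (volume : Measure ℝ),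
        Fgamma γ m' = ⨆ n : ℕ, ∫⁻ k in Set.Icc (-(n:ℝ)) (n:ℝ), g m' k := by
      intro m'
      rw [hFg]
      have hpt : ∀ k, g m' k = ⨆ n : ℕ, (Set.Icc (-(n:ℝ)) (n:ℝ)).indicator (g m') k := by
        intro k
        apply le_antisymm
        · obtain ⟨n, hn⟩ := exists_nat_ge |k|
          refine le_iSup_of_le n ?_
          rw [Set.indicator_of_mem]
          exact ⟨neg_le_of_abs_le hn, le_of_abs_le hn⟩
        · exact iSup_le fun n => Set.indicator_le_self _ _ k
      calc ∫⁻ k, g m' k = ∫⁻ k, ⨆ n : ℕ, (Set.Icc (-(n:ℝ)) (n:ℝ)).indicator (g m') k :=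
            lintegral_congr hpt
        _ = ⨆ n : ℕ, ∫⁻ k, (Set.Icc (-(n:ℝ)) (n:ℝ)).indicator (g m') k := by
            refine lintegral_iSup (fun n => (hgmeas m').indicator measurableSet_Icc) ?_
            intro i j hij
            exact Set.indicator_le_indicator_of_subset
              (Set.Icc_subset_Icc (neg_le_neg (Nat.cast_le.mpr hij)) (Nat.cast_le.mpr hij))
              (fun a => zero_le)
        _ = ⨆ n : ℕ, ∫⁻ k in Set.Icc (-(n:ℝ)) (n:ℝ), g m' k := by
            congr 1; funext n; rw [lintegral_indicator measurableSet_Icc]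
    rw [hsup] at hc
    obtain ⟨n, hn⟩ := lt_iSup_iff.mp hc
    obtain ⟨ε, hε0, hεlt⟩ := ENNReal.lt_iff_exists_add_pos_lt.mp hn
    set B : ℝ := ‖m‖ + Real.exp n with hB
    have hB0 : 0 ≤ B := by positivity
    set K : ℝ := (2 * B + 3) * Real.exp (γ * n) with hK
    have hK0 : 0 < K := by positivity
    set C : ℝ := 2 * n * K + 1 with hC
    have hC0 : 0 < C := by positivity
    have hε0' : (0:ℝ) < ε := hε0
    set δ : ℝ := min 1 ((ε : ℝ) / C) with hδ
    have hδ0 : 0 < δ := lt_min one_pos (div_pos hε0' hC0)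
    have hδ1 : δ ≤ 1 := min_le_left _ _
    filter_upwards [Metric.ball_mem_nhds m hδ0] with m' hm'
    have hm'δ : dist m' m < δ := Metric.mem_ball.mp hm'
    have hdist : ∀ k, ‖FT (⇑m) k - FT (⇑m') k‖ ≤ δ := by
      intro k
      refine (FT_dist_le m m' k).trans ?_
      rw [dist_comm]
      exact hm'δ.le
    have hpoint : ∀ k ∈ Set.Icc (-(n:ℝ)) (n:ℝ), g m k ≤ g m' k + ENNReal.ofReal (δ * K) := by
      intro k hk
      obtain ⟨hk1, hk2⟩ := hk
      set A := ‖FT (⇑m) k - (Real.exp k : ℂ)‖ with hA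
      set A' := ‖FT (⇑m') k - (Real.exp k : ℂ)‖ with hA'
      have hA0 : 0 ≤ A := norm_nonneg _
      have hA'0 : 0 ≤ A' := norm_nonneg _
      have hAA' : A ≤ A' + δ := by
        have h1 : FT (⇑m) k - (Real.exp k : ℂ)
            = (FT (⇑m') k - Real.exp k) + (FT (⇑m) k - FT (⇑m') k) := by ring
        rw [hA, h1]
        exact (norm_add_le _ _).trans (add_le_add_right (hdist k) _)
      have hnorm' : ‖m'‖ ≤ ‖m‖ + δ := by
        have h2 := norm_sub_norm_le m' m
        rw [← dist_eq_norm] at h2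
        linarith
      have hA'B : A' ≤ B + 1 := by
        have h3 : A' ≤ ‖FT (⇑m') k‖ + ‖((Real.exp k : ℝ) : ℂ)‖ := norm_sub_le _ _
        have h4 : ‖((Real.exp k : ℝ) : ℂ)‖ = Real.exp k := by
          rw [Complex.norm_real]; exact abs_of_pos (Real.exp_pos k)
        have h5 := FT_norm_le_norm m' k
        have h6 : Real.exp k ≤ Real.exp n := Real.exp_le_exp.mpr hk2
        rw [h4] at h3
        rw [hB] at *
        linarith
      have hsq : A ^ 2 ≤ A' ^ 2 + δ * (2 * A' + δ) := by nlinarith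
      have hwt : Real.exp (-γ * k) ≤ Real.exp (γ * n) := by
        apply Real.exp_le_exp.mpr
        nlinarith
      have hsecond : δ * (2 * A' + δ) * Real.exp (-γ * k) ≤ δ * K := by
        have h7 : 2 * A' + δ ≤ 2 * B + 3 := by linarith
        calc δ * (2 * A' + δ) * Real.exp (-γ * k) ≤ δ * (2 * B + 3) * Real.exp (γ * n) := by
              apply mul_le_mul (mul_le_mul le_rfl h7 (by positivity) hδ0.le) hwt (by positivity)
                (by positivity)
          _ = δ * K := by rw [hK]; ring
      have hsplit : g m k = ENNReal.ofReal (A ^ 2) * ENNReal.ofReal (Real.exp (-γ * k)) := by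
        rw [hg]; simp only [nnnorm_sq_ennreal, hA]
      have hsplit' : g m' k = ENNReal.ofReal (A' ^ 2) * ENNReal.ofReal (Real.exp (-γ * k)) := by
        rw [hg]; simp only [nnnorm_sq_ennreal, hA']
      calc g m k = ENNReal.ofReal (A ^ 2) * ENNReal.ofReal (Real.exp (-γ * k)) := hsplit
        _ ≤ ENNReal.ofReal (A' ^ 2 + δ * (2 * A' + δ)) * ENNReal.ofReal (Real.exp (-γ * k)) := by
            gcongr
        _ = ENNReal.ofReal (A' ^ 2) * ENNReal.ofReal (Real.exp (-γ * k))
            + ENNReal.ofReal (δ * (2 * A' + δ)) * ENNReal.ofReal (Real.exp (-γ * k)) := by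
            rw [ENNReal.ofReal_add (by positivity) (by positivity), add_mul]
        _ ≤ g m' k + ENNReal.ofReal (δ * K) := by
            rw [hsplit']
            apply add_le_add le_rfl
            rw [← ENNReal.ofReal_mul (by positivity)]
            exact ENNReal.ofReal_le_ofReal hsecond
    have hεbound : ENNReal.ofReal (δ * K) * volume (Set.Icc (-(n:ℝ)) (n:ℝ)) ≤ (ε : ℝ≥0∞) := by
      rw [Real.volume_Icc, ← ENNReal.ofReal_mul (by positivity)]
      have hδε : δ ≤ (ε : ℝ) / C := min_le_right _ _
      have harith : δ * K * ((n:ℝ) - -(n:ℝ)) ≤ (ε : ℝ) := by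
        have h8 : δ * K * ((n:ℝ) - -(n:ℝ)) = δ * (2 * n * K) := by ring
        rw [h8]
        have h9 : (2 * (n:ℝ) * K) ≤ C := by rw [hC]; linarith
        have h10 : 0 ≤ 2 * (n:ℝ) * K := by positivity
        calc δ * (2 * (n:ℝ) * K) ≤ ((ε : ℝ) / C) * C := by
              apply mul_le_mul hδε h9 h10 (by positivity)
          _ = (ε : ℝ) := div_mul_cancel₀ _ hC0.ne'
      calc ENNReal.ofReal (δ * K * ((n:ℝ) - -(n:ℝ))) ≤ ENNReal.ofReal (ε : ℝ) :=
            ENNReal.ofReal_le_ofReal harith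
        _ = (ε : ℝ≥0∞) := ENNReal.ofReal_coe_nnreal
    have hchain : c + (ε : ℝ≥0∞) < Fgamma γ m' + (ε : ℝ≥0∞) := by
      calc c + (ε : ℝ≥0∞) < ∫⁻ k in Set.Icc (-(n:ℝ)) (n:ℝ), g m k := hεlt
        _ ≤ ∫⁻ k in Set.Icc (-(n:ℝ)) (n:ℝ), (g m' k + ENNReal.ofReal (δ * K)) :=
            setLIntegral_mono ((hgmeas m').add measurable_const) hpoint
        _ = (∫⁻ k in Set.Icc (-(n:ℝ)) (n:ℝ), g m' k)
            + ENNReal.ofReal (δ * K) * volume (Set.Icc (-(n:ℝ)) (n:ℝ)) := by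
            rw [lintegral_add_right _ measurable_const, setLIntegral_const]
        _ ≤ Fgamma γ m' + (ε : ℝ≥0∞) := by
            apply add_le_add ?_ hεbound
            rw [hFg m']
            exact setLIntegral_le_lintegral _ _
    exact (ENNReal.add_lt_add_iff_right (by simp)).mp hchain
end

section
/- Let g ∈ L¹(ℝ) be an even function. Then η_g(φ) := ∫_0^∞ [g(k)/(k(cosh(2k)−1))]·(φ(k) − φ(−k) − 2φ'(0)k) dk defines a tempered distribution on ℝ. Moreover, for any y with |y| ≤ 2, the map φ ↦ η_g(e^{-y(·)} φ) also defines a tempered distribution. -/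
open MeasureTheory Complex SchwartzMap

namespace EtaAux
noncomputable section

lemma smoothID (φ : SchwartzMap ℝ ℂ) (n : ℕ) : ContDiff ℝ 1 (iteratedDeriv n ⇑φ) := by
  rw [iteratedDeriv_eq_iterate]
  exact ContDiff.iterate_deriv' 1 n (by exact_mod_cast φ.smooth (1+n : ℕ))

lemma hdID (φ : SchwartzMap ℝ ℂ) (n : ℕ) (x : ℝ) :
    HasDerivAt (iteratedDeriv n ⇑φ) (iteratedDeriv (n+1) ⇑φ x) x := by
  rw [iteratedDeriv_succ]
  exact ((smoothID φ n).differentiable one_ne_zero x).hasDerivAt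

lemma hdφ (φ : SchwartzMap ℝ ℂ) (x : ℝ) :
    HasDerivAt (⇑φ) (iteratedDeriv 1 ⇑φ x) x := by
  simpa [iteratedDeriv_zero] using hdID φ 0 x

lemma hdexp (y x : ℝ) :
    HasDerivAt (fun t : ℝ => Real.exp (-(y*t))) (-y * Real.exp (-(y*x))) x := by
  have := (Real.hasDerivAt_exp (-(y*x))).comp x (((hasDerivAt_id x).const_mul y).neg)
  exact this.congr_deriv (by ring)

def Phi0 (y : ℝ) (φ : SchwartzMap ℝ ℂ) : ℝ → ℂ := fun x => Real.exp (-(y*x)) • φ x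
def Phi1 (y : ℝ) (φ : SchwartzMap ℝ ℂ) : ℝ → ℂ := fun x =>
  Real.exp (-(y*x)) • (iteratedDeriv 1 ⇑φ x - (y:ℂ) * φ x)
def Phi2 (y : ℝ) (φ : SchwartzMap ℝ ℂ) : ℝ → ℂ := fun x =>
  Real.exp (-(y*x)) • (iteratedDeriv 2 ⇑φ x - ((2*y : ℝ):ℂ) * iteratedDeriv 1 ⇑φ x
    + ((y^2 : ℝ):ℂ) * φ x)
def Phi3 (y : ℝ) (φ : SchwartzMap ℝ ℂ) : ℝ → ℂ := fun x =>
  Real.exp (-(y*x)) • (iteratedDeriv 3 ⇑φ x - ((3*y : ℝ):ℂ) * iteratedDeriv 2 ⇑φ x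
    + ((3*y^2 : ℝ):ℂ) * iteratedDeriv 1 ⇑φ x - ((y^3 : ℝ):ℂ) * φ x)

lemma hdPhi0 (y : ℝ) (φ : SchwartzMap ℝ ℂ) (x : ℝ) :
    HasDerivAt (Phi0 y φ) (Phi1 y φ x) x := by
  have h := (hdexp y x).smul (hdφ φ x)
  have : Phi1 y φ x = Real.exp (-(y*x)) • iteratedDeriv 1 ⇑φ x + (-y * Real.exp (-(y*x))) • φ x := by
    simp only [Phi1, Complex.real_smul]
    push_cast
    ring
  rw [this]; exact h

lemma hdPhi1 (y : ℝ) (φ : SchwartzMap ℝ ℂ) (x : ℝ) :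
    HasDerivAt (Phi1 y φ) (Phi2 y φ x) x := by
  have hin : HasDerivAt (fun t => iteratedDeriv 1 ⇑φ t - (y:ℂ) * φ t)
      (iteratedDeriv 2 ⇑φ x - (y:ℂ) * iteratedDeriv 1 ⇑φ x) x :=
    (hdID φ 1 x).sub ((hdφ φ x).const_mul (y:ℂ))
  have h := (hdexp y x).smul hin
  have : Phi2 y φ x = Real.exp (-(y*x)) • (iteratedDeriv 2 ⇑φ x - (y:ℂ) * iteratedDeriv 1 ⇑φ x)
      + (-y * Real.exp (-(y*x))) • (iteratedDeriv 1 ⇑φ x - (y:ℂ) * φ x) := by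
    simp only [Phi2, Complex.real_smul]
    push_cast
    ring
  rw [this]; exact h

lemma hdPhi2 (y : ℝ) (φ : SchwartzMap ℝ ℂ) (x : ℝ) :
    HasDerivAt (Phi2 y φ) (Phi3 y φ x) x := by
  have hin : HasDerivAt
      (fun t => iteratedDeriv 2 ⇑φ t - ((2*y : ℝ):ℂ) * iteratedDeriv 1 ⇑φ t + ((y^2 : ℝ):ℂ) * φ t)
      (iteratedDeriv 3 ⇑φ x - ((2*y : ℝ):ℂ) * iteratedDeriv 2 ⇑φ x
        + ((y^2 : ℝ):ℂ) * iteratedDeriv 1 ⇑φ x) x :=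
    ((hdID φ 2 x).sub ((hdID φ 1 x).const_mul _)).add ((hdφ φ x).const_mul _)
  have h := (hdexp y x).smul hin
  have : Phi3 y φ x = Real.exp (-(y*x)) • (iteratedDeriv 3 ⇑φ x
        - ((2*y : ℝ):ℂ) * iteratedDeriv 2 ⇑φ x + ((y^2 : ℝ):ℂ) * iteratedDeriv 1 ⇑φ x)
      + (-y * Real.exp (-(y*x))) • (iteratedDeriv 2 ⇑φ x - ((2*y : ℝ):ℂ) * iteratedDeriv 1 ⇑φ x
        + ((y^2 : ℝ):ℂ) * φ x) := by
    simp only [Phi3, Complex.real_smul]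
    push_cast
    ring
  rw [this]; exact h

def S (φ : SchwartzMap ℝ ℂ) : ℝ :=
  SchwartzMap.seminorm ℂ 0 0 φ + SchwartzMap.seminorm ℂ 0 1 φ +
  SchwartzMap.seminorm ℂ 0 2 φ + SchwartzMap.seminorm ℂ 0 3 φ

lemma normID_le (φ : SchwartzMap ℝ ℂ) (n : ℕ) (x : ℝ) :
    ‖iteratedDeriv n ⇑φ x‖ ≤ SchwartzMap.seminorm ℂ 0 n φ := by
  simpa using SchwartzMap.le_seminorm' ℂ 0 n φ x

lemma normφ_le (φ : SchwartzMap ℝ ℂ) (x : ℝ) :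
    ‖φ x‖ ≤ SchwartzMap.seminorm ℂ 0 0 φ := by
  simpa [iteratedDeriv_zero] using normID_le φ 0 x

lemma S_nonneg (φ : SchwartzMap ℝ ℂ) : 0 ≤ S φ := by
  have h0 := apply_nonneg (SchwartzMap.seminorm ℂ (E := ℝ) (F := ℂ) 0 0) φ
  have h1 := apply_nonneg (SchwartzMap.seminorm ℂ (E := ℝ) (F := ℂ) 0 1) φ
  have h2 := apply_nonneg (SchwartzMap.seminorm ℂ (E := ℝ) (F := ℂ) 0 2) φ
  have h3 := apply_nonneg (SchwartzMap.seminorm ℂ (E := ℝ) (F := ℂ) 0 3) φ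
  unfold S; linarith

lemma cosh_id (k : ℝ) : Real.cosh (2*k) - 1 = 2 * Real.sinh k ^ 2 := by
  rw [Real.cosh_two_mul, Real.cosh_sq]; ring

lemma Phi3_le (y : ℝ) (hy : |y| ≤ 2) (φ : SchwartzMap ℝ ℂ) (x : ℝ)
    (hx : x ∈ Set.Icc (-1:ℝ) 1) : ‖Phi3 y φ x‖ ≤ 96 * S φ := by
  set M0 := SchwartzMap.seminorm ℂ 0 0 φ
  set M1 := SchwartzMap.seminorm ℂ 0 1 φ
  set M2 := SchwartzMap.seminorm ℂ 0 2 φ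
  set M3 := SchwartzMap.seminorm ℂ 0 3 φ
  have hb0 : ‖φ x‖ ≤ M0 := normφ_le φ x
  have hb1 : ‖iteratedDeriv 1 ⇑φ x‖ ≤ M1 := normID_le φ 1 x
  have hb2 : ‖iteratedDeriv 2 ⇑φ x‖ ≤ M2 := normID_le φ 2 x
  have hb3 : ‖iteratedDeriv 3 ⇑φ x‖ ≤ M3 := normID_le φ 3 x
  have hexp : Real.exp (-(y*x)) ≤ 8 := by
    have h1 : |x| ≤ 1 := abs_le.mpr ⟨hx.1, hx.2⟩
    have h2 : -(y*x) ≤ 2 := by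
      have := (abs_mul y x) ▸ (neg_le_abs (y*x))
      nlinarith [abs_nonneg y, abs_nonneg x]
    calc Real.exp (-(y*x)) ≤ Real.exp 2 := Real.exp_le_exp.mpr h2
      _ ≤ 8 := by
          have h := Real.exp_one_lt_d9
          have e2 : Real.exp 2 = Real.exp 1 * Real.exp 1 := by rw [← Real.exp_add]; norm_num
          nlinarith [Real.exp_pos 1]
  have hcombo : ‖iteratedDeriv 3 ⇑φ x - ((3*y : ℝ):ℂ) * iteratedDeriv 2 ⇑φ x
      + ((3*y^2 : ℝ):ℂ) * iteratedDeriv 1 ⇑φ x - ((y^3 : ℝ):ℂ) * φ x‖ ≤ 12 * S φ := by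
    have tri : ‖iteratedDeriv 3 ⇑φ x - ((3*y : ℝ):ℂ) * iteratedDeriv 2 ⇑φ x
        + ((3*y^2 : ℝ):ℂ) * iteratedDeriv 1 ⇑φ x - ((y^3 : ℝ):ℂ) * φ x‖
        ≤ ‖iteratedDeriv 3 ⇑φ x‖ + ‖((3*y : ℝ):ℂ) * iteratedDeriv 2 ⇑φ x‖
          + ‖((3*y^2 : ℝ):ℂ) * iteratedDeriv 1 ⇑φ x‖ + ‖((y^3 : ℝ):ℂ) * φ x‖ := by
      calc ‖_ - _ + _ - _‖ ≤ ‖iteratedDeriv 3 ⇑φ x - ((3*y : ℝ):ℂ) * iteratedDeriv 2 ⇑φ x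
            + ((3*y^2 : ℝ):ℂ) * iteratedDeriv 1 ⇑φ x‖ + ‖((y^3 : ℝ):ℂ) * φ x‖ := norm_sub_le _ _
        _ ≤ _ := by
            have h1 := norm_add_le (iteratedDeriv 3 ⇑φ x - ((3*y : ℝ):ℂ) * iteratedDeriv 2 ⇑φ x)
              (((3*y^2 : ℝ):ℂ) * iteratedDeriv 1 ⇑φ x)
            have h2 := norm_sub_le (iteratedDeriv 3 ⇑φ x) (((3*y : ℝ):ℂ) * iteratedDeriv 2 ⇑φ x)
            linarith
    have n2 : ‖((3*y : ℝ):ℂ) * iteratedDeriv 2 ⇑φ x‖ ≤ 6 * M2 := by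
      rw [norm_mul, Complex.norm_real, Real.norm_eq_abs]
      have : |3*y| ≤ 6 := by rw [abs_mul]; simp; linarith [hy, abs_nonneg y]
      nlinarith [norm_nonneg (iteratedDeriv 2 ⇑φ x), abs_nonneg (3*y)]
    have n1 : ‖((3*y^2 : ℝ):ℂ) * iteratedDeriv 1 ⇑φ x‖ ≤ 12 * M1 := by
      rw [norm_mul, Complex.norm_real, Real.norm_eq_abs]
      have hy2 : |3*y^2| ≤ 12 := by
        rw [_root_.abs_of_nonneg (by positivity : (0:ℝ) ≤ 3*y^2)]
        nlinarith [abs_nonneg y, _root_.sq_abs y]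
      nlinarith [norm_nonneg (iteratedDeriv 1 ⇑φ x), abs_nonneg (3*y^2)]
    have n0 : ‖((y^3 : ℝ):ℂ) * φ x‖ ≤ 8 * M0 := by
      rw [norm_mul, Complex.norm_real, Real.norm_eq_abs]
      have hy3 : |y^3| ≤ 8 := by
        have h3 : |y^3| = |y|^3 := _root_.abs_pow y 3
        rw [h3]
        calc |y|^3 ≤ 2^3 := pow_le_pow_left₀ (abs_nonneg y) hy 3
          _ = 8 := by norm_num
      nlinarith [norm_nonneg (φ x), abs_nonneg (y^3)]
    have hS : M3 + 6*M2 + 12*M1 + 8*M0 ≤ 12 * S φ := by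
      have h0 := apply_nonneg (SchwartzMap.seminorm ℂ (E := ℝ) (F := ℂ) 0 0) φ
      have h1 := apply_nonneg (SchwartzMap.seminorm ℂ (E := ℝ) (F := ℂ) 0 1) φ
      have h2 := apply_nonneg (SchwartzMap.seminorm ℂ (E := ℝ) (F := ℂ) 0 2) φ
      have h3 := apply_nonneg (SchwartzMap.seminorm ℂ (E := ℝ) (F := ℂ) 0 3) φ
      unfold S; linarith
    linarith
  have : ‖Phi3 y φ x‖ = Real.exp (-(y*x)) * ‖iteratedDeriv 3 ⇑φ x
      - ((3*y : ℝ):ℂ) * iteratedDeriv 2 ⇑φ x + ((3*y^2 : ℝ):ℂ) * iteratedDeriv 1 ⇑φ x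
      - ((y^3 : ℝ):ℂ) * φ x‖ := by
    rw [Phi3, norm_smul, Real.norm_eq_abs, abs_of_pos (Real.exp_pos _)]
  rw [this]
  nlinarith [Real.exp_pos (-(y*x)), norm_nonneg (iteratedDeriv 3 ⇑φ x - ((3*y : ℝ):ℂ) * iteratedDeriv 2 ⇑φ x + ((3*y^2 : ℝ):ℂ) * iteratedDeriv 1 ⇑φ x - ((y^3 : ℝ):ℂ) * φ x), S_nonneg φ]

lemma taylor_bound (y : ℝ) (φ : SchwartzMap ℝ ℂ) {M : ℝ}
    (hM : ∀ x ∈ Set.Icc (-1:ℝ) 1, ‖Phi3 y φ x‖ ≤ M)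
    (k : ℝ) (hk0 : 0 ≤ k) (hk1 : k ≤ 1) :
    ‖Phi0 y φ k - Phi0 y φ (-k) - (2*k : ℝ) • Phi1 y φ 0‖ ≤ 2 * M * k^3 := by
  have hM0 : 0 ≤ M := le_trans (norm_nonneg _) (hM 0 (by norm_num))
  set s : Set ℝ := Set.Icc (-k) k with hs
  have hconv : Convex ℝ s := convex_Icc _ _
  have h0s : (0:ℝ) ∈ s := ⟨neg_nonpos.mpr hk0, hk0⟩
  have hks : k ∈ s := ⟨by linarith, le_rfl⟩
  have hmks : -k ∈ s := ⟨le_rfl, by linarith⟩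
  have hsub : s ⊆ Set.Icc (-1:ℝ) 1 := Set.Icc_subset_Icc (by linarith) hk1
  have habs : ∀ t ∈ s, ‖t - 0‖ ≤ k := by
    intro t ht
    rw [sub_zero, Real.norm_eq_abs, abs_le]; exact ⟨ht.1, ht.2⟩
  -- Step 1
  have h1 : ∀ t ∈ s, ‖Phi2 y φ t - Phi2 y φ 0‖ ≤ M * k := by
    intro t ht
    have hmvt := hconv.norm_image_sub_le_of_norm_hasDerivWithin_le
      (f := Phi2 y φ) (f' := Phi3 y φ) (C := M)
      (fun u _ => (hdPhi2 y φ u).hasDerivWithinAt)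
      (fun u hu => hM u (hsub hu)) h0s ht
    calc ‖Phi2 y φ t - Phi2 y φ 0‖ ≤ M * ‖t - 0‖ := hmvt
      _ ≤ M * k := by nlinarith [habs t ht, norm_nonneg (t-(0:ℝ))]
  -- Step 2
  have h2 : ∀ t ∈ s, ‖Phi1 y φ t - t • Phi2 y φ 0 - Phi1 y φ 0‖ ≤ (M*k) * k := by
    intro t ht
    have hder : ∀ u ∈ s, HasDerivWithinAt (fun t => Phi1 y φ t - t • Phi2 y φ 0)
        (Phi2 y φ u - Phi2 y φ 0) s u := by
      intro u _
      have hc : HasDerivAt (fun t : ℝ => t • Phi2 y φ 0) (Phi2 y φ 0) u := by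
        have := (hasDerivAt_id u).smul_const (Phi2 y φ 0)
        rwa [one_smul] at this
      exact ((hdPhi1 y φ u).sub hc).hasDerivWithinAt
    have hmvt := hconv.norm_image_sub_le_of_norm_hasDerivWithin_le hder
      (fun u hu => h1 u hu) h0s ht
    have h0 : Phi1 y φ 0 - (0:ℝ) • Phi2 y φ 0 = Phi1 y φ 0 := by
      rw [zero_smul, sub_zero]
    rw [h0] at hmvt
    calc ‖Phi1 y φ t - t • Phi2 y φ 0 - Phi1 y φ 0‖ ≤ M * k * ‖t - 0‖ := hmvt
      _ ≤ M * k * k := by nlinarith [habs t ht, norm_nonneg (t-(0:ℝ)), mul_nonneg hM0 hk0]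
  -- Step 3
  have hder3 : ∀ u ∈ s, HasDerivWithinAt
      (fun t => Phi0 y φ t - t • Phi1 y φ 0 - (t^2/2) • Phi2 y φ 0)
      (Phi1 y φ u - Phi1 y φ 0 - u • Phi2 y φ 0) s u := by
    intro u _
    have hc1 : HasDerivAt (fun t : ℝ => t • Phi1 y φ 0) (Phi1 y φ 0) u := by
      have := (hasDerivAt_id u).smul_const (Phi1 y φ 0)
      rwa [one_smul] at this
    have hq : HasDerivAt (fun t : ℝ => t^2/2) u u := by
      have := (hasDerivAt_pow 2 u).div_const 2
      norm_num at this
      simpa using this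
    have hc2 : HasDerivAt (fun t : ℝ => (t^2/2) • Phi2 y φ 0) (u • Phi2 y φ 0) u :=
      hq.smul_const (Phi2 y φ 0)
    exact (((hdPhi0 y φ u).sub hc1).sub hc2).hasDerivWithinAt
  have hbd3 : ∀ u ∈ s, ‖Phi1 y φ u - Phi1 y φ 0 - u • Phi2 y φ 0‖ ≤ M * k * k := by
    intro u hu
    have := h2 u hu
    have heq : Phi1 y φ u - Phi1 y φ 0 - u • Phi2 y φ 0
        = Phi1 y φ u - u • Phi2 y φ 0 - Phi1 y φ 0 := by ring_nf
    rw [heq]; exact this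
  have hmvt := hconv.norm_image_sub_le_of_norm_hasDerivWithin_le hder3 hbd3 hmks hks
  have hnk : ‖k - -k‖ = 2 * k := by
    rw [sub_neg_eq_add, Real.norm_eq_abs, _root_.abs_of_nonneg (by linarith : (0:ℝ) ≤ k + k)]; ring
  rw [hnk] at hmvt
  have hid : Phi0 y φ k - k • Phi1 y φ 0 - (k^2/2) • Phi2 y φ 0
      - (Phi0 y φ (-k) - (-k) • Phi1 y φ 0 - ((-k)^2/2) • Phi2 y φ 0)
      = Phi0 y φ k - Phi0 y φ (-k) - (2*k : ℝ) • Phi1 y φ 0 := by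
    simp only [Complex.real_smul]
    push_cast
    ring
  rw [hid] at hmvt
  calc ‖Phi0 y φ k - Phi0 y φ (-k) - (2*k : ℝ) • Phi1 y φ 0‖ ≤ M * k * k * (2*k) := hmvt
    _ = 2 * M * k^3 := by ring


lemma he1' : (2.7:ℝ) ≤ Real.exp 1 := by nlinarith [Real.exp_one_gt_d9]
lemma he2' : (7.2:ℝ) ≤ Real.exp 2 := by
  have h : Real.exp 2 = Real.exp 1 * Real.exp 1 := by rw [← Real.exp_add]; norm_num
  nlinarith [he1']
lemma hexpneg2' : Real.exp (-2) ≤ 0.15 := by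
  rw [Real.exp_neg, inv_le_comm₀ (by linarith [he2']) (by norm_num)]
  linarith [he2']
lemma sinh_lb' (k : ℝ) (hk : 1 ≤ k) : 0.4 * Real.exp k ≤ Real.sinh k := by
  have hek : Real.exp (-k) ≤ Real.exp k * 0.15 := by
    have h : Real.exp (-k) ≤ Real.exp k * Real.exp (-2) := by
      rw [← Real.exp_add]; exact Real.exp_le_exp.mpr (by linarith)
    nlinarith [Real.exp_pos k, hexpneg2']
  rw [Real.sinh_eq]; nlinarith [Real.exp_pos k]
lemma sinh_ge_one' (k : ℝ) (hk : 1 ≤ k) : 1 ≤ Real.sinh k := by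
  have h := sinh_lb' k hk
  have h2 : Real.exp 1 ≤ Real.exp k := Real.exp_le_exp.mpr hk
  nlinarith [he1']
lemma cosh_id' (k : ℝ) : Real.cosh (2*k) - 1 = 2 * Real.sinh k ^ 2 := by
  rw [Real.cosh_two_mul, Real.cosh_sq]; ring
lemma D_lb1' (k : ℝ) (hk : 1 ≤ k) : 0.32 * Real.exp (2*k) ≤ Real.cosh (2*k) - 1 := by
  rw [cosh_id', show (2:ℝ)*k = k + k by ring, Real.exp_add]
  nlinarith [sinh_lb' k hk, Real.exp_pos k, sinh_ge_one' k hk]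
lemma D_lb2' (k : ℝ) (hk : 1 ≤ k) : 2 ≤ Real.cosh (2*k) - 1 := by
  rw [cosh_id']; nlinarith [sinh_ge_one' k hk]

def psi (y : ℝ) (φ : SchwartzMap ℝ ℂ) (k : ℝ) : ℂ :=
  (Real.exp (-y * k) : ℂ) * φ k - (Real.exp (y * k) : ℂ) * φ (-k) -
    (2 * k : ℝ) • (deriv (⇑φ) 0 - (y : ℂ) * φ 0)

lemma psi_eq (y : ℝ) (φ : SchwartzMap ℝ ℂ) (k : ℝ) :
    psi y φ k = Phi0 y φ k - Phi0 y φ (-k) - (2*k : ℝ) • Phi1 y φ 0 := by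
  unfold psi Phi0 Phi1
  rw [show -(y * -k) = y*k by ring, show -(y*(0:ℝ)) = 0 by ring, Real.exp_zero, one_smul,
    iteratedDeriv_one, show -(y*k) = -y*k by ring]
  simp [Complex.real_smul]

lemma normφ_le_S (φ : SchwartzMap ℝ ℂ) (x : ℝ) : ‖φ x‖ ≤ S φ := by
  have h1 := apply_nonneg (SchwartzMap.seminorm ℂ (E := ℝ) (F := ℂ) 0 1) φ
  have h2 := apply_nonneg (SchwartzMap.seminorm ℂ (E := ℝ) (F := ℂ) 0 2) φ
  have h3 := apply_nonneg (SchwartzMap.seminorm ℂ (E := ℝ) (F := ℂ) 0 3) φ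
  have := normφ_le φ x
  unfold S; linarith

lemma normderiv_le_S (φ : SchwartzMap ℝ ℂ) (x : ℝ) : ‖deriv (⇑φ) x‖ ≤ S φ := by
  have h0 := apply_nonneg (SchwartzMap.seminorm ℂ (E := ℝ) (F := ℂ) 0 0) φ
  have h2 := apply_nonneg (SchwartzMap.seminorm ℂ (E := ℝ) (F := ℂ) 0 2) φ
  have h3 := apply_nonneg (SchwartzMap.seminorm ℂ (E := ℝ) (F := ℂ) 0 3) φ
  have : ‖deriv (⇑φ) x‖ ≤ SchwartzMap.seminorm ℂ 0 1 φ := by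
    rw [← iteratedDeriv_one]; exact normID_le φ 1 x
  unfold S; linarith

lemma psi_big (y : ℝ) (hy : |y| ≤ 2) (φ : SchwartzMap ℝ ℂ) (k : ℝ) (hk : 1 ≤ k) :
    ‖psi y φ k‖ ≤ 10 * S φ * (k * (Real.cosh (2*k) - 1)) := by
  have hSn : 0 ≤ S φ := S_nonneg φ
  have hk0 : (0:ℝ) ≤ k := by linarith
  have hyk1 : -y*k ≤ 2*k := by nlinarith [neg_le_abs y]
  have hyk2 : y*k ≤ 2*k := by nlinarith [le_abs_self y]
  have h1 : ‖(Real.exp (-y*k) : ℂ) * φ k‖ ≤ Real.exp (2*k) * S φ := by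
    rw [norm_mul, Complex.norm_real, Real.norm_eq_abs, _root_.abs_of_pos (Real.exp_pos _)]
    exact mul_le_mul (Real.exp_le_exp.mpr hyk1) (normφ_le_S φ k) (norm_nonneg _) (Real.exp_pos _).le
  have h2 : ‖(Real.exp (y*k) : ℂ) * φ (-k)‖ ≤ Real.exp (2*k) * S φ := by
    rw [norm_mul, Complex.norm_real, Real.norm_eq_abs, _root_.abs_of_pos (Real.exp_pos _)]
    exact mul_le_mul (Real.exp_le_exp.mpr hyk2) (normφ_le_S φ (-k)) (norm_nonneg _) (Real.exp_pos _).le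
  have h3 : ‖((2*k : ℝ)) • (deriv (⇑φ) 0 - (y:ℂ) * φ 0)‖ ≤ 2*k*(3 * S φ) := by
    rw [norm_smul, Real.norm_eq_abs, _root_.abs_of_nonneg (by linarith : (0:ℝ) ≤ 2*k)]
    have hb : ‖(y:ℂ)*φ 0‖ ≤ 2 * S φ := by
      rw [norm_mul, Complex.norm_real, Real.norm_eq_abs]
      nlinarith [normφ_le_S φ 0, abs_nonneg y, norm_nonneg (φ 0)]
    have ha : ‖deriv (⇑φ) 0 - (y:ℂ)*φ 0‖ ≤ 3 * S φ := by
      have := norm_sub_le (deriv (⇑φ) 0) ((y:ℂ)*φ 0)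
      have := normderiv_le_S φ 0
      linarith
    nlinarith [norm_nonneg (deriv (⇑φ) 0 - (y:ℂ)*φ 0)]
  have htri : ‖psi y φ k‖ ≤ 2 * (Real.exp (2*k) * S φ) + 2*k*(3 * S φ) := by
    unfold psi
    have t1 := norm_sub_le ((Real.exp (-y*k):ℂ) * φ k - (Real.exp (y*k):ℂ) * φ (-k))
      (((2*k : ℝ)) • (deriv (⇑φ) 0 - (y:ℂ)*φ 0))
    have t2 := norm_sub_le ((Real.exp (-y*k):ℂ) * φ k) ((Real.exp (y*k):ℂ) * φ (-k))
    linarith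
  have hDlb1 := D_lb1' k hk
  have hDlb2 := D_lb2' k hk
  have hDn : (0:ℝ) ≤ Real.cosh (2*k) - 1 := by linarith
  have p1 : 2 * (Real.exp (2*k) * S φ) ≤ 6.25 * ((Real.cosh (2*k) - 1) * S φ) := by
    nlinarith [mul_le_mul_of_nonneg_right hDlb1 hSn]
  have p2 : (Real.cosh (2*k) - 1) * S φ ≤ k * ((Real.cosh (2*k) - 1) * S φ) := by
    nlinarith [mul_nonneg hDn hSn]
  have p3 : 2*k*(3 * S φ) ≤ 3 * (k * ((Real.cosh (2*k) - 1) * S φ)) := by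
    nlinarith [mul_le_mul_of_nonneg_left hDlb2 (mul_nonneg hk0 hSn)]
  have hkDS : 0 ≤ k * ((Real.cosh (2*k) - 1) * S φ) := by positivity
  nlinarith

lemma psi_key (y : ℝ) (hy : |y| ≤ 2) (φ : SchwartzMap ℝ ℂ) (k : ℝ) (hk : 0 < k) :
    ‖psi y φ k‖ ≤ 200 * S φ * (k * (Real.cosh (2*k) - 1)) := by
  have hD : Real.cosh (2*k) - 1 = 2 * Real.sinh k ^2 := cosh_id' k
  have hsinh : k ≤ Real.sinh k := Real.self_le_sinh_iff.mpr hk.le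
  have hkD : 0 ≤ k * (Real.cosh (2*k) - 1) := by rw [hD]; nlinarith
  have hSn := S_nonneg φ
  rcases le_or_gt k 1 with hk1 | hk1
  · have hM : ∀ x ∈ Set.Icc (-1:ℝ) 1, ‖Phi3 y φ x‖ ≤ 96 * S φ := fun x hx => Phi3_le y hy φ x hx
    have ht := taylor_bound y φ hM k hk.le hk1
    rw [psi_eq]
    have hp : k^2 ≤ Real.sinh k ^2 := pow_le_pow_left₀ hk.le hsinh 2
    have hq : S φ * (k * k^2) ≤ S φ * (k * Real.sinh k ^2) := by
      nlinarith [mul_le_mul_of_nonneg_left hp hk.le]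
    rw [hD]
    have hpos : 0 ≤ S φ * (k * Real.sinh k ^2) := by positivity
    nlinarith [hpos]
  · have := psi_big y hy φ k hk1.le
    nlinarith


def coef (g : ℝ → ℝ) (k : ℝ) : ℂ := ((g k / (k * (Real.cosh (2 * k) - 1)) : ℝ) : ℂ)

lemma diffφ (φ : SchwartzMap ℝ ℂ) : Differentiable ℝ ⇑φ := by
  simpa [iteratedDeriv_zero] using (smoothID φ 0).differentiable one_ne_zero

lemma coef_bound (g : ℝ → ℝ) (y : ℝ) (hy : |y| ≤ 2) (φ : SchwartzMap ℝ ℂ) (k : ℝ)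
    (hk : k ∈ Set.Ioi (0:ℝ)) :
    ‖coef g k * psi y φ k‖ ≤ ‖g k‖ * (200 * S φ) := by
  have hk0 : (0:ℝ) < k := hk
  have hD : 0 < k * (Real.cosh (2*k) - 1) := by
    rw [cosh_id' k]
    have h1 : 0 < Real.sinh k := by
      have := Real.self_le_sinh_iff.mpr hk0.le; linarith
    positivity
  have hkey := psi_key y hy φ k hk0
  rw [norm_mul]
  unfold coef
  rw [Complex.norm_real, Real.norm_eq_abs, abs_div, _root_.abs_of_pos hD,
    div_mul_eq_mul_div, div_le_iff₀ hD, Real.norm_eq_abs]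
  calc |g k| * ‖psi y φ k‖ ≤ |g k| * (200 * S φ * (k * (Real.cosh (2*k) - 1))) :=
        mul_le_mul_of_nonneg_left hkey (abs_nonneg _)
    _ = |g k| * (200 * S φ) * (k * (Real.cosh (2*k) - 1)) := by ring

lemma psi_cont (y : ℝ) (φ : SchwartzMap ℝ ℂ) : Continuous (psi y φ) := by
  unfold psi
  apply Continuous.sub
  apply Continuous.sub
  · exact (Complex.continuous_ofReal.comp (Real.continuous_exp.comp
      (continuous_const.mul continuous_id))).mul φ.continuous
  · exact (Complex.continuous_ofReal.comp (Real.continuous_exp.comp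
      (continuous_const.mul continuous_id))).mul (φ.continuous.comp continuous_neg)
  · exact ((continuous_const.mul continuous_id)).smul continuous_const

lemma integrand_integrable (g : ℝ → ℝ) (hg : Integrable g) (y : ℝ) (hy : |y| ≤ 2)
    (φ : SchwartzMap ℝ ℂ) :
    IntegrableOn (fun k => coef g k * psi y φ k) (Set.Ioi 0) := by
  apply Integrable.mono' ((hg.norm.mul_const (200 * S φ)).restrict (s := Set.Ioi 0))
  · apply AEStronglyMeasurable.mul _ (psi_cont y φ).aestronglyMeasurable.restrict
    apply Complex.continuous_ofReal.comp_aestronglyMeasurable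
    have hrw : (fun k : ℝ => g k / (k * (Real.cosh (2 * k) - 1)))
        = fun k : ℝ => g k * (k * (Real.cosh (2 * k) - 1))⁻¹ := by
      funext k; rw [div_eq_mul_inv]
    rw [hrw]
    exact hg.1.restrict.mul ((continuous_id.mul ((Real.continuous_cosh.comp
      (continuous_const.mul continuous_id)).sub
      continuous_const)).measurable.inv.aestronglyMeasurable.restrict)
  · rw [ae_restrict_iff' measurableSet_Ioi]
    filter_upwards with k hk
    exact coef_bound g y hy φ k hk

lemma psi_add (y : ℝ) (φ θ : SchwartzMap ℝ ℂ) (k : ℝ) :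
    psi y (φ + θ) k = psi y φ k + psi y θ k := by
  have hcoe : ⇑(φ + θ) = ⇑φ + ⇑θ := by funext x; rfl
  unfold psi
  rw [hcoe]
  rw [show deriv (⇑φ + ⇑θ) 0 = deriv (⇑φ) 0 + deriv (⇑θ) 0 from
    deriv_add ((diffφ φ) 0) ((diffφ θ) 0)]
  simp only [Pi.add_apply, Complex.real_smul]
  push_cast
  ring

lemma psi_smul (y : ℝ) (a : ℂ) (φ : SchwartzMap ℝ ℂ) (k : ℝ) :
    psi y (a • φ) k = a * psi y φ k := by
  have hcoe : ⇑(a • φ) = fun x => a • φ x := by funext x; rfl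
  unfold psi
  rw [hcoe]
  rw [show deriv (fun x => a • φ x) 0 = a • deriv (⇑φ) 0 from
    deriv_const_smul a ((diffφ φ) 0)]
  simp only [smul_eq_mul, Complex.real_smul]
  push_cast
  ring

lemma exists_T (g : ℝ → ℝ) (hg : Integrable g) (y : ℝ) (hy : |y| ≤ 2) :
    ∃ T : SchwartzMap ℝ ℂ →L[ℂ] ℂ, ∀ φ : SchwartzMap ℝ ℂ,
      T φ = ∫ k in Set.Ioi (0:ℝ), coef g k * psi y φ k := by
  refine ⟨SchwartzMap.mkCLMtoNormedSpace
    (fun φ => ∫ k in Set.Ioi (0:ℝ), coef g k * psi y φ k) ?_ ?_ ?_, fun φ => rfl⟩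
  · intro φ θ
    have heq : (fun k => coef g k * psi y (φ + θ) k)
        = fun k => coef g k * psi y φ k + coef g k * psi y θ k := by
      funext k; rw [psi_add]; ring
    rw [heq]
    exact integral_add (integrand_integrable g hg y hy φ) (integrand_integrable g hg y hy θ)
  · intro a φ
    have heq : (fun k => coef g k * psi y (a • φ) k)
        = fun k => a • (coef g k * psi y φ k) := by
      funext k; rw [psi_smul]; simp only [smul_eq_mul]; ring
    rw [heq, integral_smul]
    rfl
  · refine ⟨{(0,0),(0,1),(0,2),(0,3)}, 800 * ∫ x, ‖g x‖,
      by positivity, fun φ => ?_⟩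
    have hnorm : ‖∫ k in Set.Ioi (0:ℝ), coef g k * psi y φ k‖
        ≤ ∫ k in Set.Ioi (0:ℝ), ‖g k‖ * (200 * S φ) := by
      apply norm_integral_le_of_norm_le ((hg.norm.mul_const (200 * S φ)).restrict)
      rw [ae_restrict_iff' measurableSet_Ioi]
      filter_upwards with k hk
      exact coef_bound g y hy φ k hk
    have h2 : ∫ k in Set.Ioi (0:ℝ), ‖g k‖ * (200 * S φ)
        = (∫ k in Set.Ioi (0:ℝ), ‖g k‖) * (200 * S φ) := integral_mul_const _ _
    have h3 : ∫ k in Set.Ioi (0:ℝ), ‖g k‖ ≤ ∫ k, ‖g k‖ :=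
      setIntegral_le_integral hg.norm (ae_of_all _ fun x => norm_nonneg _)
    have h4 : (0:ℝ) ≤ ∫ k in Set.Ioi (0:ℝ), ‖g k‖ :=
      integral_nonneg fun x => norm_nonneg _
    set Q := Finset.sup {(0,0),(0,1),(0,2),(0,3)} (schwartzSeminormFamily ℂ ℝ ℂ) with hQ
    have hsup : ∀ j : ℕ, (0,j) ∈ ({(0,0),(0,1),(0,2),(0,3)} : Finset (ℕ × ℕ)) →
        SchwartzMap.seminorm ℂ 0 j φ ≤ Q φ := by
      intro j hj
      rw [← schwartzSeminormFamily_apply]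
      exact Seminorm.le_def.mp (Finset.le_sup hj) φ
    have hQn : 0 ≤ Q φ := apply_nonneg _ _
    have hSQ : S φ ≤ 4 * Q φ := by
      have q0 := hsup 0 (by simp)
      have q1 := hsup 1 (by simp)
      have q2 := hsup 2 (by simp)
      have q3 := hsup 3 (by simp)
      unfold S; linarith
    have hSn := S_nonneg φ
    calc ‖∫ k in Set.Ioi (0:ℝ), coef g k * psi y φ k‖
        ≤ (∫ k in Set.Ioi (0:ℝ), ‖g k‖) * (200 * S φ) := by rw [← h2]; exact hnorm
      _ ≤ (∫ k, ‖g k‖) * (200 * S φ) := by nlinarith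
      _ ≤ (∫ k, ‖g k‖) * (200 * (4 * Q φ)) := by nlinarith
      _ = 800 * (∫ x, ‖g x‖) * Q φ := by ring

end
end EtaAux

open EtaAux in
theorem eta_tempered (g : ℝ → ℝ) (hg : Integrable g) (heven : ∀ k, g (-k) = g k) :
    (∃ T : SchwartzMap ℝ ℂ →L[ℂ] ℂ, ∀ φ : SchwartzMap ℝ ℂ,
      T φ = ∫ k in Set.Ioi (0 : ℝ),
        ((g k / (k * (Real.cosh (2 * k) - 1)) : ℝ) : ℂ) *
          (φ k - φ (-k) - (2 * k : ℝ) • deriv (⇑φ) 0)) ∧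
    (∀ y : ℝ, |y| ≤ 2 → ∃ T : SchwartzMap ℝ ℂ →L[ℂ] ℂ, ∀ φ : SchwartzMap ℝ ℂ,
      T φ = ∫ k in Set.Ioi (0 : ℝ),
        ((g k / (k * (Real.cosh (2 * k) - 1)) : ℝ) : ℂ) *
          ((Real.exp (-y * k) : ℂ) * φ k - (Real.exp (y * k) : ℂ) * φ (-k) -
            (2 * k : ℝ) • (deriv (⇑φ) 0 - (y : ℂ) * φ 0))) := by
  constructor
  · obtain ⟨T, hT⟩ := EtaAux.exists_T g hg 0 (by norm_num)
    refine ⟨T, fun φ => (hT φ).trans ?_⟩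
    congr 1
    funext k
    unfold EtaAux.coef EtaAux.psi
    norm_num
  · intro y hy
    obtain ⟨T, hT⟩ := EtaAux.exists_T g hg y hy
    refine ⟨T, fun φ => (hT φ).trans ?_⟩
    rfl
end

section
/- Let 1 ≤ p ≤ ∞ and let h be holomorphic on the strip S = {x+iy : 0 < y < 1} with ‖h‖_{H^{p,2}} := sup_{0<y<1} inf{ (1/(1−y))‖f_y‖_{L^p} + (1/y)‖g_y‖_{L²} : f_y + g_y = h(· + iy) } < ∞. Then for every z = x + iy ∈ S, |h(z)| ≲ ‖h‖_{H^{p,2}} ( y^{-1/p} + (1−y)^{-1/2} ). -/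
open MeasureTheory Complex Metric Real
open scoped ENNReal


lemma mean_value {h : ℂ → ℂ} {c : ℂ} {R : ℝ} (hR : 0 < R)
    (hc : ContinuousOn h (closedBall c R))
    (hd : ∀ w ∈ ball c R, DifferentiableAt ℂ h w) :
    2 * π * ‖h c‖ ≤ ∫ θ in (0:ℝ)..(2*π), ‖h (circleMap c R θ)‖ := by
  have key := circleIntegral_sub_center_inv_smul_of_differentiable_on_off_countable hR
    Set.countable_empty hc (fun z hz => hd z hz.1)
  have h1 : ‖(2 * (π:ℂ) * I) • h c‖ = 2 * π * ‖h c‖ := by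
    rw [norm_smul]
    have : ‖(2 * (π:ℂ) * I)‖ = 2 * π := by
      simp [norm_mul, _root_.abs_of_nonneg pi_pos.le]
    rw [this]
  have h2 : ‖∮ z in C(c, R), (z - c)⁻¹ • h z‖ ≤ ∫ θ in (0:ℝ)..(2*π), ‖h (circleMap c R θ)‖ := by
    rw [circleIntegral]
    refine le_trans (intervalIntegral.norm_integral_le_integral_norm (by positivity)) ?_
    apply le_of_eq
    apply intervalIntegral.integral_congr
    intro θ _
    simp only [deriv_circleMap, circleMap_sub_center]
    rw [smul_eq_mul, smul_eq_mul, norm_mul, norm_mul, norm_mul, norm_inv]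
    simp only [norm_circleMap_zero, _root_.abs_of_pos hR, Complex.norm_I,
      mul_one]
    field_simp
  calc 2 * π * ‖h c‖ = ‖(2 * (π:ℂ) * I) • h c‖ := h1.symm
    _ = ‖∮ z in C(c, R), (z - c)⁻¹ • h z‖ := by rw [key]
    _ ≤ _ := h2


lemma area_bound {h : ℂ → ℂ} {c : ℂ} {r : ℝ} (hr : 0 < r)
    (hc : ContinuousOn h (closedBall c r))
    (hd : ∀ w ∈ ball c r, DifferentiableAt ℂ h w) :
    π * r^2 * ‖h c‖ ≤ ∫ w : ℂ, (ball c r).indicator (fun w => ‖h w‖) w := by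
  set G : ℂ → ℝ := (ball c r).indicator (fun w => ‖h w‖) with hG
  set T : Set (ℝ × ℝ) := Set.Ioo (0:ℝ) r ×ˢ Set.Ioo (-π) π with hT
  set F' : ℝ × ℝ → ℝ := fun p => p.1 * ‖h (c + Complex.polarCoord.symm p)‖ with hF'
  have hsymm : ∀ p : ℝ × ℝ, Complex.polarCoord.symm p
      = (p.1 : ℂ) * ((Real.cos p.2 : ℂ) + (Real.sin p.2 : ℂ) * I) :=
    fun p => Complex.polarCoord_symm_apply p
  have habs : ∀ p : ℝ × ℝ, ‖Complex.polarCoord.symm p‖ = |p.1| :=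
    fun p => Complex.norm_polarCoord_symm p
  -- continuity of F' on the compact rectangle
  have hmap : Continuous (fun p : ℝ × ℝ => c + Complex.polarCoord.symm p) := by
    have : (fun p : ℝ × ℝ => c + Complex.polarCoord.symm p)
        = fun p : ℝ × ℝ => c + (p.1 : ℂ) * ((Real.cos p.2 : ℂ) + (Real.sin p.2 : ℂ) * I) := by
      funext p; rw [hsymm]
    rw [this]
    continuity
  have hmapsto : ∀ p ∈ Set.Icc (0:ℝ) r ×ˢ Set.Icc (-π) π,
      c + Complex.polarCoord.symm p ∈ closedBall c r := by
    rintro p ⟨h1, _⟩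
    simp only [mem_closedBall, Complex.dist_eq, add_sub_cancel_left, habs]
    rw [_root_.abs_of_nonneg h1.1]; exact h1.2
  have hF'cont : ContinuousOn F' (Set.Icc (0:ℝ) r ×ˢ Set.Icc (-π) π) := by
    apply ContinuousOn.mul (continuous_fst.continuousOn)
    exact (hc.comp hmap.continuousOn hmapsto).norm
  have hF'int : IntegrableOn F' T := by
    refine (hF'cont.integrableOn_compact (isCompact_Icc.prod isCompact_Icc)).mono_set ?_
    exact Set.prod_mono Set.Ioo_subset_Icc_self Set.Ioo_subset_Icc_self
  -- lower bound for the polar integral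
  have hlow : π * r^2 * ‖h c‖ ≤ ∫ p in T, F' p := by
    have hprodres : (volume : Measure (ℝ × ℝ)).restrict T
        = ((volume : Measure ℝ).restrict (Set.Ioo (0:ℝ) r)).prod
          ((volume : Measure ℝ).restrict (Set.Ioo (-π) π)) := by
      rw [Measure.prod_restrict, ← Measure.volume_eq_prod]
    have hsplit : ∫ p in T, F' p
        = ∫ R in Set.Ioo (0:ℝ) r, ∫ θ in Set.Ioo (-π) π, F' (R, θ) := by
      rw [hT, Measure.volume_eq_prod]
      apply setIntegral_prod
      rwa [← Measure.volume_eq_prod]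
    rw [hsplit]
    have hginteg : Integrable (fun R => ∫ θ in Set.Ioo (-π) π, F' (R, θ))
        ((volume : Measure ℝ).restrict (Set.Ioo (0:ℝ) r)) := by
      have := hF'int
      rw [IntegrableOn, hprodres] at this
      exact this.integral_prod_left
    have hle : ∀ R ∈ Set.Ioo (0:ℝ) r,
        2 * π * ‖h c‖ * R ≤ ∫ θ in Set.Ioo (-π) π, F' (R, θ) := by
      intro R hR
      have hR0 : 0 < R := hR.1
      have hcirc : ∀ θ : ℝ, circleMap c R θ = c + Complex.polarCoord.symm (R, θ) := by
        intro θ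
        rw [hsymm]
        simp only [circleMap]
        congr 1
        rw [Complex.exp_mul_I]
        simp [Complex.ofReal_cos, Complex.ofReal_sin]
      have h1 : 2 * π * ‖h c‖ ≤ ∫ θ in (0:ℝ)..(2*π), ‖h (circleMap c R θ)‖ :=
        mean_value hR0 (hc.mono (closedBall_subset_closedBall hR.2.le))
          (fun w hw => hd w (ball_subset_ball hR.2.le hw))
      have hper : Function.Periodic (fun θ : ℝ => ‖h (circleMap c R θ)‖) (2*π) :=
        fun θ => by simp [periodic_circleMap c R θ]
      have h2 : ∫ θ in (0:ℝ)..(2*π), ‖h (circleMap c R θ)‖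
          = ∫ θ in (-π)..(π), ‖h (circleMap c R θ)‖ := by
        have heq : -π + 2*π = π := by ring
        have := hper.intervalIntegral_add_eq (-π) 0
        rw [zero_add, heq] at this
        exact this.symm
      have h3 : ∫ θ in (-π)..(π), ‖h (circleMap c R θ)‖
          = ∫ θ in Set.Ioo (-π) π, ‖h (circleMap c R θ)‖ := by
        rw [intervalIntegral.integral_of_le (by linarith [pi_pos]), integral_Ioc_eq_integral_Ioo]
      have h4 : ∫ θ in Set.Ioo (-π) π, F' (R, θ)
          = R * ∫ θ in Set.Ioo (-π) π, ‖h (circleMap c R θ)‖ := by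
        rw [← integral_const_mul]
        apply setIntegral_congr_fun measurableSet_Ioo
        intro θ _
        simp only [hF', hcirc θ]
      rw [h4]
      calc 2 * π * ‖h c‖ * R = R * (2 * π * ‖h c‖) := by ring
        _ ≤ R * ∫ θ in Set.Ioo (-π) π, ‖h (circleMap c R θ)‖ := by
            apply mul_le_mul_of_nonneg_left _ hR0.le
            rw [← h3, ← h2]; exact h1
    have hmono : ∫ R in Set.Ioo (0:ℝ) r, (2 * π * ‖h c‖ * R)
        ≤ ∫ R in Set.Ioo (0:ℝ) r, ∫ θ in Set.Ioo (-π) π, F' (R, θ) := by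
      apply integral_mono_of_nonneg
      · filter_upwards [ae_restrict_mem measurableSet_Ioo] with R hR
        have h0R : (0:ℝ) ≤ R := hR.1.le
        positivity
      · exact hginteg
      · filter_upwards [ae_restrict_mem measurableSet_Ioo] with R hR
        exact hle R hR
    refine le_trans (le_of_eq ?_) hmono
    have : ∫ R in Set.Ioo (0:ℝ) r, (2 * π * ‖h c‖ * R)
        = (2 * π * ‖h c‖) * ∫ R in Set.Ioo (0:ℝ) r, R := by
      rw [← integral_const_mul]
    rw [this]
    have : ∫ R in Set.Ioo (0:ℝ) r, R = r^2/2 := by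
      rw [← integral_Ioc_eq_integral_Ioo, ← intervalIntegral.integral_of_le hr.le,
        integral_id]
      ring
    rw [this]; ring
  -- identify polar integral with the complex integral of G
  have hFT : ∫ p in T, F' p = ∫ p in T, p.1 • G (c + Complex.polarCoord.symm p) := by
    apply setIntegral_congr_fun (measurableSet_Ioo.prod measurableSet_Ioo)
    intro p hp
    have hmem : c + Complex.polarCoord.symm p ∈ ball c r := by
      simp only [mem_ball, Complex.dist_eq, add_sub_cancel_left, habs]
      rw [_root_.abs_of_nonneg hp.1.1.le]; exact hp.1.2
    simp only [hF', hG, smul_eq_mul, Set.indicator_of_mem hmem]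
  have hTtarget : ∫ p in polarCoord.target, p.1 • G (c + Complex.polarCoord.symm p)
      = ∫ p in T, p.1 • G (c + Complex.polarCoord.symm p) := by
    apply setIntegral_eq_of_subset_of_forall_diff_eq_zero
      (polarCoord.open_target.measurableSet)
    · rw [polarCoord_target]
      exact Set.prod_mono Set.Ioo_subset_Ioi_self (le_refl _)
    · rintro p ⟨hp1, hp2⟩
      rw [polarCoord_target] at hp1
      have hp1' : 0 < p.1 := hp1.1
      have : ¬ (p.1 < r) := by
        intro hlt
        exact hp2 ⟨⟨hp1', hlt⟩, hp1.2⟩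
      have hnotmem : c + Complex.polarCoord.symm p ∉ ball c r := by
        simp only [mem_ball, Complex.dist_eq, add_sub_cancel_left, habs]
        rw [_root_.abs_of_nonneg hp1'.le]
        exact fun hh => this hh
      rw [hG, Set.indicator_of_notMem hnotmem, smul_zero]
  have hpolar : ∫ p in polarCoord.target, p.1 • G (c + Complex.polarCoord.symm p)
      = ∫ w : ℂ, G w := by
    rw [Complex.integral_comp_polarCoord_symm (fun w => G (c + w))]
    exact integral_add_left_eq_self G c
  calc π * r^2 * ‖h c‖ ≤ ∫ p in T, F' p := hlow
    _ = ∫ p in T, p.1 • G (c + Complex.polarCoord.symm p) := hFT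
    _ = ∫ p in polarCoord.target, p.1 • G (c + Complex.polarCoord.symm p) := hTtarget.symm
    _ = ∫ w : ℂ, G w := hpolar


lemma slice_eq {h : ℂ → ℂ} {c : ℂ} {r : ℝ} (hr : 0 < r)
    (hc : ContinuousOn h (closedBall c r)) :
    ∫ w : ℂ, (ball c r).indicator (fun w => ‖h w‖) w
      = ∫ q in Set.Ioo (c.im - r) (c.im + r),
          (∫ x : ℝ, (ball c r).indicator (fun w => ‖h w‖) (x + q*I)) := by
  set G : ℂ → ℝ := (ball c r).indicator (fun w => ‖h w‖) with hG
  have hGmeas : AEStronglyMeasurable G (volume : Measure ℂ) := by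
    rw [hG, aestronglyMeasurable_indicator_iff measurableSet_ball]
    exact ((hc.mono ball_subset_closedBall).norm).aestronglyMeasurable measurableSet_ball
  have hGint : Integrable G (volume : Measure ℂ) := by
    apply MeasureTheory.IntegrableOn.integrable_indicator _ measurableSet_ball
    exact (hc.norm.integrableOn_compact (isCompact_closedBall c r)).mono_set
      ball_subset_closedBall
  have hMP : MeasurePreserving (Complex.measurableEquivRealProd.symm)
      (volume : Measure (ℝ × ℝ)) (volume : Measure ℂ) :=
    Complex.volume_preserving_equiv_real_prod.symm _
  have hemb : MeasurableEmbedding (Complex.measurableEquivRealProd.symm) :=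
    (Complex.measurableEquivRealProd.symm).measurableEmbedding
  have h1 : ∫ w : ℂ, G w = ∫ p : ℝ × ℝ, G (Complex.measurableEquivRealProd.symm p) :=
    (hMP.integral_comp hemb G).symm
  have hKint : Integrable (fun p : ℝ × ℝ => G (Complex.measurableEquivRealProd.symm p)) :=
    (hMP.integrable_comp_emb hemb).mpr hGint
  have hsymm_apply : ∀ x q : ℝ,
      (Complex.measurableEquivRealProd.symm (x, q) : ℂ) = x + q*Complex.I := by
    intro x q
    simp [Complex.measurableEquivRealProd, Complex.equivRealProdCLM_symm_apply]
  have h2 : ∫ p : ℝ × ℝ, G (Complex.measurableEquivRealProd.symm p)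
      = ∫ q : ℝ, ∫ x : ℝ, G (x + q*Complex.I) := by
    rw [Measure.volume_eq_prod]
    rw [integral_prod _ (by rw [← Measure.volume_eq_prod]; exact hKint)]
    have hswap := integral_integral_swap
      (f := fun x q => G (Complex.measurableEquivRealProd.symm (x, q)))
      (μ := (volume : Measure ℝ)) (ν := (volume : Measure ℝ))
      (by
        rw [← Measure.volume_eq_prod]
        apply hKint.congr
        filter_upwards with p
        rfl)
    rw [hswap]
    congr 1
    funext q
    congr 1
    funext x
    rw [hsymm_apply]
  have h3 : ∫ q : ℝ, ∫ x : ℝ, G (x + q*Complex.I)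
      = ∫ q in Set.Ioo (c.im - r) (c.im + r), ∫ x : ℝ, G (x + q*Complex.I) := by
    symm
    apply setIntegral_eq_integral_of_forall_compl_eq_zero
    intro q hq
    have : ∀ x : ℝ, G (x + q*Complex.I) = 0 := by
      intro x
      apply Set.indicator_of_notMem
      intro hmem
      rw [mem_ball, Complex.dist_eq] at hmem
      have him : |(((x:ℂ) + q*Complex.I) - c).im| ≤ ‖((x:ℂ) + q*Complex.I) - c‖ :=
        Complex.abs_im_le_norm _
      simp only [Complex.sub_im, Complex.add_im, Complex.ofReal_im, Complex.mul_im,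
        Complex.I_im, Complex.I_re, Complex.ofReal_re, Complex.mul_re] at him
      have : |q - c.im| < r := by
        have := lt_of_le_of_lt (le_trans (by simp; ring_nf; rfl) him) hmem
        convert this using 2
      rw [abs_lt] at this
      exact hq ⟨by linarith [this.1], by linarith [this.2]⟩
    simp [this]
  rw [h1, h2, h3]


lemma norm_from_bound {X : ℝ≥0∞} {a b : ℝ} (ha : 0 < a) (hb : 0 ≤ b)
    (hX : ENNReal.ofReal (1/a) * X ≤ ENNReal.ofReal b) :
    X ≤ ENNReal.ofReal (a * b) := by
  have h1 : ENNReal.ofReal (1/a) = (ENNReal.ofReal a)⁻¹ := by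
    rw [one_div, ENNReal.ofReal_inv_of_pos ha]
  rw [h1] at hX
  have h2 := mul_le_mul_right hX (ENNReal.ofReal a)
  rw [← mul_assoc, ENNReal.mul_inv_cancel (by simp [ha]) ENNReal.ofReal_ne_top,
    one_mul, ← ENNReal.ofReal_mul ha.le] at h2
  exact h2

lemma holder_slice {f : ℝ → ℂ} {p : ℝ≥0∞} (hp : 1 ≤ p) (hf : MemLp f p (volume : Measure ℝ))
    {a b : ℝ} (hab : a < b) {M : ℝ} (hM : 0 ≤ M)
    (hfp : eLpNorm f p volume ≤ ENNReal.ofReal M) :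
    ∫ x in Set.Ioo a b, ‖f x‖ ≤ M * (b - a) ^ (1 - (p.toReal)⁻¹) := by
  set μ := (volume : Measure ℝ).restrict (Set.Ioo a b) with hμ
  haveI : IsFiniteMeasure μ := ⟨by
    rw [hμ, Measure.restrict_apply_univ, Real.volume_Ioo]
    exact ENNReal.ofReal_lt_top⟩
  have hfr : MemLp f p μ := hf.restrict _
  have hf1 : MemLp f 1 μ := hfr.mono_exponent hp
  have hInt : ∫ x in Set.Ioo a b, ‖f x‖ = (eLpNorm f 1 μ).toReal := by
    rw [integral_norm_eq_lintegral_enorm hf1.aestronglyMeasurable,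
      eLpNorm_one_eq_lintegral_enorm]
  rw [hInt]
  have hchain : eLpNorm f 1 μ ≤ ENNReal.ofReal (M * (b - a) ^ (1 - (p.toReal)⁻¹)) := by
    calc eLpNorm f 1 μ
        ≤ eLpNorm f p μ * μ Set.univ ^ (1/(1:ℝ≥0∞).toReal - 1/p.toReal) :=
          eLpNorm_le_eLpNorm_mul_rpow_measure_univ hp hfr.aestronglyMeasurable
      _ ≤ ENNReal.ofReal M * ENNReal.ofReal (b - a) ^ (1 - (p.toReal)⁻¹) := by
          apply mul_le_mul'
          · exact le_trans (eLpNorm_mono_measure f Measure.restrict_le_self) hfp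
          · rw [hμ, Measure.restrict_apply_univ, Real.volume_Ioo]
            apply le_of_eq
            congr 1
            simp [one_div]
      _ = ENNReal.ofReal (M * (b - a) ^ (1 - (p.toReal)⁻¹)) := by
          rw [ENNReal.ofReal_mul hM, ← ENNReal.ofReal_rpow_of_pos (by linarith : (0:ℝ) < b - a)]
  exact ENNReal.toReal_le_of_le_ofReal (mul_nonneg hM (Real.rpow_nonneg (by linarith) _)) hchain


lemma calc_A {yy ip : ℝ} (hy0 : 0 < yy) (hy1 : yy < 1) (hip0 : 0 ≤ ip) (hip1 : ip ≤ 1) :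
    (1 - yy + min yy (1-yy)/2) * (2*(min yy (1-yy)/2)) ^ (1-ip)
      + (yy + min yy (1-yy)/2) * (2*(min yy (1-yy)/2)) ^ ((1:ℝ)/2)
    ≤ 6 * (min yy (1-yy)/2) * (yy ^ (-ip) + (1-yy) ^ (-(1/2:ℝ))) := by
  have hu0 : (0:ℝ) < 1 - yy := by linarith
  have ha : (0:ℝ) ≤ yy ^ (-ip) := rpow_nonneg hy0.le _
  have hb : (1:ℝ) ≤ (1-yy) ^ (-(1/2:ℝ)) :=
    one_le_rpow_of_pos_of_le_one_of_nonpos hu0 (by linarith) (by norm_num)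
  rcases le_total yy (1-yy) with hm | hm
  · rw [min_eq_left hm]
    have h2r : 2 * (yy/2) = yy := by ring
    rw [h2r]
    have he1 : yy ^ (1-ip) = yy * yy ^ (-ip) := by
      rw [show (1-ip) = 1 + (-ip) by ring, rpow_add hy0, rpow_one]
    have hc : yy ^ ((1:ℝ)/2) ≤ 1 := rpow_le_one hy0.le hy1.le (by norm_num)
    have hc0 : (0:ℝ) ≤ yy ^ ((1:ℝ)/2) := rpow_nonneg hy0.le _
    rw [he1]
    nlinarith [mul_nonneg hy0.le ha, mul_nonneg hy0.le (sub_nonneg.2 hb),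
      mul_nonneg hy0.le (sub_nonneg.2 hc), mul_le_mul_of_nonneg_left hc hy0.le,
      mul_nonneg (mul_nonneg hy0.le hy0.le) ha]
  · rw [min_eq_right hm]
    have h2r : 2 * ((1-yy)/2) = 1-yy := by ring
    rw [h2r]
    have he1 : (1-yy) ^ (1-ip) ≤ 1 := rpow_le_one hu0.le (by linarith) (by linarith)
    have he0 : (0:ℝ) ≤ (1-yy) ^ (1-ip) := rpow_nonneg hu0.le _
    have hhalf : (1-yy) ^ ((1:ℝ)/2) = (1-yy) * (1-yy) ^ (-(1/2:ℝ)) := by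
      rw [← rpow_one_add' hu0.le (by norm_num)]
      norm_num
    rw [hhalf]
    have hyu : yy + (1-yy)/2 ≤ 3/2 := by linarith
    nlinarith [mul_nonneg hu0.le ha, mul_nonneg hu0.le (sub_nonneg.2 hb),
      mul_nonneg hu0.le (sub_nonneg.2 he1), mul_nonneg (mul_nonneg hu0.le hu0.le) (sub_nonneg.2 hb),
      mul_le_mul_of_nonneg_left he1 hu0.le,
      mul_nonneg (mul_nonneg hu0.le hu0.le) ha, mul_nonneg hu0.le ha]
set_option maxHeartbeats 1000000 in
theorem uniform_estimate_Hp2 :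
    ∃ C : ℝ, 0 < C ∧
      ∀ p : ℝ≥0∞, 1 ≤ p →
        ∀ h : ℂ → ℂ, DifferentiableOn ℂ h {z : ℂ | 0 < z.im ∧ z.im < 1} →
          ∀ N : ℝ, 0 ≤ N →
            (∀ y : ℝ, 0 < y → y < 1 → ∀ ε : ℝ, 0 < ε →
              ∃ f g : ℝ → ℂ,
                MemLp f p (volume : Measure ℝ) ∧ MemLp g 2 (volume : Measure ℝ) ∧
                (∀ x : ℝ, f x + g x = h (x + y * Complex.I)) ∧
                ENNReal.ofReal (1 / (1 - y)) * eLpNorm f p volume +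
                    ENNReal.ofReal (1 / y) * eLpNorm g 2 volume ≤
                  ENNReal.ofReal (N + ε)) →
            ∀ z : ℂ, 0 < z.im → z.im < 1 →
              ‖h z‖ ≤ C * N * (z.im ^ (-(p.toReal)⁻¹) + (1 - z.im) ^ (-(1 / 2 : ℝ))) := by
  refine ⟨10, by norm_num, ?_⟩
  intro p hp h hdiff N hN hyp z hy0 hy1
  set yy := z.im with hyy
  set x0 := z.re with hx0
  set ip := (p.toReal)⁻¹ with hip
  have hip0 : 0 ≤ ip := inv_nonneg.2 ENNReal.toReal_nonneg
  have hip1 : ip ≤ 1 := by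
    rcases eq_or_ne p ∞ with hptop | hptop
    · simp [hip, hptop]
    · have h1 : 1 ≤ p.toReal := by
        rw [← ENNReal.toReal_one]
        exact ENNReal.toReal_mono hptop hp
      rw [hip]
      exact inv_le_one_of_one_le₀ h1
  set S := yy ^ (-ip) + (1 - yy) ^ (-(1/2:ℝ)) with hS
  have hS0 : 0 < S :=
    add_pos (Real.rpow_pos_of_pos hy0 _) (Real.rpow_pos_of_pos (by linarith) _)
  have main : ∀ ε : ℝ, 0 < ε → ‖h z‖ ≤ 10 * (N + ε) * S := by
    intro ε hε
    have hNε : 0 < N + ε := by linarith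
    set r := min yy (1 - yy) / 2 with hr
    have hmin : 0 < min yy (1 - yy) := lt_min hy0 (by linarith)
    have hr0 : 0 < r := by rw [hr]; linarith
    have hry : r ≤ yy / 2 := by
      rw [hr]; have := min_le_left yy (1 - yy); linarith
    have hru : r ≤ (1 - yy) / 2 := by
      rw [hr]; have := min_le_right yy (1 - yy); linarith
    have hopen : IsOpen {w : ℂ | 0 < w.im ∧ w.im < 1} := by
      have : {w : ℂ | 0 < w.im ∧ w.im < 1} = Complex.im ⁻¹' Set.Ioo 0 1 := by
        ext w; simp [Set.mem_Ioo]
      rw [this]; exact isOpen_Ioo.preimage Complex.continuous_im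
    have hsub : closedBall z r ⊆ {w : ℂ | 0 < w.im ∧ w.im < 1} := by
      intro w hw
      rw [mem_closedBall, Complex.dist_eq] at hw
      have him : |(w - z).im| ≤ ‖w - z‖ := Complex.abs_im_le_norm _
      rw [Complex.sub_im] at him
      have h1 : |w.im - yy| ≤ r := le_trans him hw
      rw [abs_le] at h1
      exact ⟨by linarith [h1.1], by linarith [h1.2]⟩
    have hc : ContinuousOn h (closedBall z r) := (hdiff.continuousOn).mono hsub
    have hd : ∀ w ∈ ball z r, DifferentiableAt ℂ h w := fun w hw =>
      hdiff.differentiableAt (hopen.mem_nhds (hsub (ball_subset_closedBall hw)))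
    have harea := area_bound hr0 hc hd
    have hslice := slice_eq hr0 hc
    set Bmax : ℝ := (N + ε) * ((1 - yy + r) * (2*r) ^ (1 - ip)
      + (yy + r) * (2*r) ^ ((1:ℝ)/2)) with hBmax
    -- bound each horizontal slice
    have hBle : ∀ q ∈ Set.Ioo (z.im - r) (z.im + r),
        (∫ x : ℝ, (ball z r).indicator (fun w => ‖h w‖) (x + q*Complex.I)) ≤ Bmax := by
      intro q hq
      have hq0 : 0 < q := by have := hq.1; linarith
      have hq1 : q < 1 := by have := hq.2; linarith
      obtain ⟨f, g, hfm, hgm, hfg, hsum⟩ := hyp q hq0 hq1 ε hε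
      have hf_bound : eLpNorm f p volume ≤ ENNReal.ofReal ((1 - q) * (N + ε)) :=
        norm_from_bound (by linarith) hNε.le (le_trans le_self_add hsum)
      have hg_bound : eLpNorm g 2 volume ≤ ENNReal.ofReal (q * (N + ε)) :=
        norm_from_bound hq0 hNε.le (le_trans le_add_self hsum)
      have hab : x0 - r < x0 + r := by linarith
      have hfi := holder_slice hp hfm hab
        (mul_nonneg (by linarith : (0:ℝ) ≤ 1 - q) hNε.le) hf_bound
      have hgi := holder_slice (by norm_num : (1:ℝ≥0∞) ≤ 2) hgm hab
        (mul_nonneg hq0.le hNε.le) hg_bound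
      rw [show x0 + r - (x0 - r) = 2*r by ring] at hfi hgi
      have h2inv : (1 : ℝ) - ((2:ℝ≥0∞).toReal)⁻¹ = 1/2 := by
        norm_num
      rw [h2inv] at hgi
      -- integrability on the slice
      haveI : IsFiniteMeasure ((volume : Measure ℝ).restrict (Set.Ioo (x0-r) (x0+r))) :=
        ⟨by rw [Measure.restrict_apply_univ, Real.volume_Ioo]; exact ENNReal.ofReal_lt_top⟩
      have hfint : IntegrableOn f (Set.Ioo (x0-r) (x0+r)) :=
        memLp_one_iff_integrable.mp ((hfm.restrict _).mono_exponent hp)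
      have hgint : IntegrableOn g (Set.Ioo (x0-r) (x0+r)) :=
        memLp_one_iff_integrable.mp ((hgm.restrict _).mono_exponent (by norm_num))
      have hsumint : IntegrableOn (fun t => ‖f t‖ + ‖g t‖) (Set.Ioo (x0-r) (x0+r)) :=
        hfint.norm.add hgint.norm
      -- pointwise domination
      have hpt : ∀ x : ℝ, (ball z r).indicator (fun w => ‖h w‖) (x + q*Complex.I)
          ≤ (Set.Ioo (x0-r) (x0+r)).indicator (fun t => ‖f t‖ + ‖g t‖) x := by
        intro x
        by_cases hmem : (x : ℂ) + q*Complex.I ∈ ball z r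
        · have hre : |x - x0| < r := by
            rw [mem_ball, Complex.dist_eq] at hmem
            have := Complex.abs_re_le_norm (((x:ℂ) + q*Complex.I) - z)
            have hrecalc : (((x:ℂ) + q*Complex.I) - z).re = x - x0 := by
              simp [Complex.sub_re, Complex.add_re, hx0]
            rw [hrecalc] at this
            exact lt_of_le_of_lt this hmem
          have hxmem : x ∈ Set.Ioo (x0-r) (x0+r) := by
            rw [abs_lt] at hre
            exact ⟨by linarith [hre.1], by linarith [hre.2]⟩
          rw [Set.indicator_of_mem hmem, Set.indicator_of_mem hxmem, ← hfg x]
          exact norm_add_le _ _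
        · rw [Set.indicator_of_notMem hmem]
          exact Set.indicator_apply_nonneg (fun _ => by positivity)
      have hinner : (∫ x : ℝ, (ball z r).indicator (fun w => ‖h w‖) (x + q*Complex.I))
          ≤ ∫ t in Set.Ioo (x0-r) (x0+r), (‖f t‖ + ‖g t‖) := by
        rw [← integral_indicator measurableSet_Ioo]
        apply integral_mono_of_nonneg
        · filter_upwards with x
          exact Set.indicator_apply_nonneg (fun _ => norm_nonneg _)
        · exact hsumint.integrable_indicator measurableSet_Ioo
        · filter_upwards with x using hpt x
      have hsplit : ∫ t in Set.Ioo (x0-r) (x0+r), (‖f t‖ + ‖g t‖)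
          = (∫ t in Set.Ioo (x0-r) (x0+r), ‖f t‖) + ∫ t in Set.Ioo (x0-r) (x0+r), ‖g t‖ :=
        integral_add hfint.norm hgint.norm
      have hfinal : (∫ t in Set.Ioo (x0-r) (x0+r), ‖f t‖)
            + (∫ t in Set.Ioo (x0-r) (x0+r), ‖g t‖) ≤ Bmax := by
        rw [hBmax]
        have hP1 : (0:ℝ) ≤ (2*r)^(1-ip) := Real.rpow_nonneg (by linarith) _
        have hP2 : (0:ℝ) ≤ (2*r)^((1:ℝ)/2) := Real.rpow_nonneg (by linarith) _
        have e1 : (1-q)*(N+ε) * (2*r)^(1-ip) ≤ (N+ε) * ((1 - yy + r) * (2*r)^(1-ip)) := by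
          have h1q : (1-q)*(N+ε) ≤ (1 - yy + r)*(N+ε) :=
            mul_le_mul_of_nonneg_right (by have := hq.1; linarith) hNε.le
          calc (1-q)*(N+ε) * (2*r)^(1-ip) ≤ (1 - yy + r)*(N+ε) * (2*r)^(1-ip) :=
                mul_le_mul_of_nonneg_right h1q hP1
            _ = (N+ε) * ((1 - yy + r) * (2*r)^(1-ip)) := by ring
        have e2 : q*(N+ε) * (2*r)^((1:ℝ)/2) ≤ (N+ε) * ((yy + r) * (2*r)^((1:ℝ)/2)) := by
          have h1q : q*(N+ε) ≤ (yy + r)*(N+ε) :=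
            mul_le_mul_of_nonneg_right (by have := hq.2; linarith) hNε.le
          calc q*(N+ε) * (2*r)^((1:ℝ)/2) ≤ (yy + r)*(N+ε) * (2*r)^((1:ℝ)/2) :=
                mul_le_mul_of_nonneg_right h1q hP2
            _ = (N+ε) * ((yy + r) * (2*r)^((1:ℝ)/2)) := by ring
        calc (∫ t in Set.Ioo (x0-r) (x0+r), ‖f t‖) + ∫ t in Set.Ioo (x0-r) (x0+r), ‖g t‖
            ≤ (1-q)*(N+ε) * (2*r)^(1-ip) + q*(N+ε) * (2*r)^((1:ℝ)/2) := add_le_add hfi hgi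
          _ ≤ (N+ε) * ((1 - yy + r) * (2*r)^(1-ip)) + (N+ε) * ((yy + r) * (2*r)^((1:ℝ)/2)) :=
              add_le_add e1 e2
          _ = (N + ε) * ((1 - yy + r) * (2*r) ^ (1 - ip) + (yy + r) * (2*r) ^ ((1:ℝ)/2)) := by
              ring
      exact le_trans hinner (le_trans (le_of_eq hsplit) hfinal)
    -- integrate the slice bound
    haveI : IsFiniteMeasure ((volume : Measure ℝ).restrict (Set.Ioo (z.im-r) (z.im+r))) :=
      ⟨by rw [Measure.restrict_apply_univ, Real.volume_Ioo]; exact ENNReal.ofReal_lt_top⟩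
    have houter : ∫ q in Set.Ioo (z.im - r) (z.im + r),
        (∫ x : ℝ, (ball z r).indicator (fun w => ‖h w‖) (x + q*Complex.I))
        ≤ (2*r) * Bmax := by
      have hmono : ∫ q in Set.Ioo (z.im - r) (z.im + r),
          (∫ x : ℝ, (ball z r).indicator (fun w => ‖h w‖) (x + q*Complex.I))
          ≤ ∫ _q in Set.Ioo (z.im - r) (z.im + r), Bmax := by
        apply integral_mono_of_nonneg
        · filter_upwards with q
          exact integral_nonneg (fun x => Set.indicator_apply_nonneg (fun _ => norm_nonneg _))
        · exact integrable_const _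
        · filter_upwards [ae_restrict_mem measurableSet_Ioo] with q hq using hBle q hq
      refine le_trans hmono (le_of_eq ?_)
      rw [setIntegral_const, Real.volume_real_Ioo, smul_eq_mul,
        show z.im + r - (z.im - r) = 2*r by ring, max_eq_left (by linarith)]
    -- assemble
    have hkey : π * r^2 * ‖h z‖ ≤ 2*r * Bmax := by
      rw [hslice] at harea
      exact le_trans harea houter
    have hA := calc_A hy0 hy1 hip0 hip1
    rw [← hr] at hA
    have hπ : (3:ℝ) < π := pi_gt_three
    have hchain : π * r^2 * ‖h z‖ ≤ π * r^2 * (10 * (N + ε) * S) := by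
      have h1 : 2*r * Bmax ≤ 2*r * ((N+ε) * (6 * r * S)) := by
        rw [hBmax]
        have := mul_le_mul_of_nonneg_left hA hNε.le
        nlinarith [hr0]
      have h2 : 2*r * ((N+ε) * (6 * r * S)) = 12 * r^2 * (N+ε) * S := by ring
      have h3 : 12 * r^2 * (N+ε) * S ≤ π * r^2 * (10 * (N + ε) * S) := by
        nlinarith [mul_pos (mul_pos (mul_pos hr0 hr0) hNε) hS0]
      linarith [le_trans hkey h1]
    exact le_of_mul_le_mul_left (by linarith [hchain]) (by positivity : (0:ℝ) < π * r^2)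
  -- send ε to zero
  have hfin : ‖h z‖ ≤ 10 * N * S := by
    apply le_of_forall_pos_le_add
    intro δ hδ
    have hε : 0 < δ / (10 * S) := by positivity
    have := main (δ / (10 * S)) hε
    have heq : 10 * (N + δ / (10 * S)) * S = 10 * N * S + δ := by
      field_simp
    linarith [this, heq ▸ this]
  exact hfin
end
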